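/- arXiv:2504.12922 — 6 statements merged into one kernel-verified Lean document; each statement's English description precedes it below -/
import Mathlib

section
/- Let (Ω,F,P) be a probability space, I a nonempty index set, and (X_i)_{i∈I}, (V_i)_{i∈I} two families of nonnegative real-valued random variables such that for all i ∈ I, almost surely: for all ε, l > 0, if X_i ∈ [ε, l] then V_i ≥ π(ε, l), where π : (0,∞)² → (0,∞). Let K > 0 satisfy K ≥ E[X_i] for all i ∈ I, and suppose (X_i)_{i∈I} is uniformly integrable with modulus μ : (0,∞) → (0,∞), i.e. for every event A ∈ F, every ε > 0 and every i ∈ I, P(A) ≤ μ(ε) implies E[X_i·1_A] ≤ ε. Define τ(ε) := π(ε/4, K/μ(ε/4)) · μ(ε/4)/2. Then for all i ∈ I and all ε > 0: if E[V_i] < τ(ε) then E[X_i] < ε. -/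
open MeasureTheory Filter Topology
open scoped ENNReal

/-- Regularity modulus in expectation from a pointwise modulus `π` under uniform integrability:
with `τ(ε) := π(ε/4, K/μ(ε/4))·μ(ε/4)/2`, `E[V_i] < τ(ε)` implies `E[X_i] < ε`.
(The expectation `E[V_i]` is taken as the possibly infinite Lebesgue integral.) -/
theorem regularity_modulus_from_uniform_integrability
    {Ω : Type*} {mΩ : MeasurableSpace Ω} {P : Measure Ω} [IsProbabilityMeasure P]
    {I : Type*} [Nonempty I] (X V : I → Ω → ℝ)
    (hXnn : ∀ i, ∀ᵐ ω ∂P, 0 ≤ X i ω) (hVnn : ∀ i, ∀ᵐ ω ∂P, 0 ≤ V i ω)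
    (hXint : ∀ i, Integrable (X i) P)
    (π : ℝ → ℝ → ℝ) (hπpos : ∀ ε > (0:ℝ), ∀ l > (0:ℝ), 0 < π ε l)
    -- almost surely: X_i ∈ [ε, l] → V_i ≥ π(ε, l), for all ε, l > 0
    (hπ : ∀ i, ∀ᵐ ω ∂P, ∀ ε > (0:ℝ), ∀ l > (0:ℝ),
        X i ω ∈ Set.Icc ε l → π ε l ≤ V i ω)
    (K : ℝ) (hKpos : 0 < K) (hK : ∀ i, ∫ ω, X i ω ∂P ≤ K)
    -- uniform integrability of (X_i) with modulus μ
    (μ : ℝ → ℝ) (hμpos : ∀ ε > (0:ℝ), 0 < μ ε)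
    (hui : ∀ A : Set Ω, MeasurableSet A → ∀ ε > (0:ℝ), ∀ i,
        P A ≤ ENNReal.ofReal (μ ε) → ∫ ω in A, X i ω ∂P ≤ ε) :
    ∀ i, ∀ ε > (0:ℝ),
      (∫⁻ ω, ENNReal.ofReal (V i ω) ∂P)
          < ENNReal.ofReal (π (ε/4) (K / μ (ε/4)) * (μ (ε/4) / 2)) →
      ∫ ω, X i ω ∂P < ε := by
  intro i ε hε hV
  set e := ε / 4 with he_def
  have he : 0 < e := by positivity
  set m := μ e with hm_def
  have hm : 0 < m := hμpos e he
  set l := K / m with hl_def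
  have hl : 0 < l := by positivity
  set p := π e l with hp_def
  have hp : 0 < p := hπpos e he l hl
  -- measurable modification of X i
  have hXm : AEMeasurable (X i) P := (hXint i).1.aemeasurable
  set Y := hXm.mk (X i) with hY_def
  have hYm : Measurable Y := hXm.measurable_mk
  have hXY : X i =ᵐ[P] Y := hXm.ae_eq_mk
  -- sets
  set B1 : Set Ω := {ω | Y ω < e} with hB1_def
  set B2 : Set Ω := {ω | Y ω ∈ Set.Icc e l} with hB2_def
  set B3 : Set Ω := {ω | l < Y ω} with hB3_def
  have hB1m : MeasurableSet B1 := measurableSet_lt hYm measurable_const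
  have hB2m : MeasurableSet B2 := hYm measurableSet_Icc
  have hB3m : MeasurableSet B3 := measurableSet_lt measurable_const hYm
  -- P B2 ≤ ofReal m via V
  have hPB2 : P B2 ≤ ENNReal.ofReal m := by
    have hae : ∀ᵐ ω ∂(P.restrict B2), p ≤ V i ω := by
      have h1 : ∀ᵐ ω ∂P, ω ∈ B2 → p ≤ V i ω := by
        filter_upwards [hπ i, hXY] with ω hω hxy hmem
        have : X i ω ∈ Set.Icc e l := by rw [hxy]; exact hmem
        exact hω e he l hl this
      exact (ae_restrict_iff' hB2m).2 h1
    have hlow : ENNReal.ofReal p * P B2 ≤ ∫⁻ ω, ENNReal.ofReal (V i ω) ∂P := by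
      calc ENNReal.ofReal p * P B2 = ∫⁻ _ in B2, ENNReal.ofReal p ∂P := by
            rw [setLIntegral_const]
        _ ≤ ∫⁻ ω in B2, ENNReal.ofReal (V i ω) ∂P :=
            lintegral_mono_ae (hae.mono fun ω h => ENNReal.ofReal_le_ofReal h)
        _ ≤ ∫⁻ ω, ENNReal.ofReal (V i ω) ∂P := setLIntegral_le_lintegral _ _
    have hup : ENNReal.ofReal p * P B2 < ENNReal.ofReal p * ENNReal.ofReal (m / 2) := by
      calc ENNReal.ofReal p * P B2 ≤ _ := hlow
        _ < ENNReal.ofReal (p * (m / 2)) := hV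
        _ = ENNReal.ofReal p * ENNReal.ofReal (m / 2) :=
            ENNReal.ofReal_mul hp.le
    have h2 : P B2 < ENNReal.ofReal (m / 2) := by
      have hp0 : ENNReal.ofReal p ≠ 0 := by simp [ENNReal.ofReal_eq_zero, not_le, hp]
      exact (ENNReal.mul_lt_mul_iff_right hp0 ENNReal.ofReal_ne_top).1 hup
    exact le_trans h2.le (ENNReal.ofReal_le_ofReal (by linarith))
  -- P B3 ≤ ofReal m via Markov
  have hPB3 : P B3 ≤ ENNReal.ofReal m := by
    have hlint : ∫⁻ ω, ENNReal.ofReal (Y ω) ∂P ≤ ENNReal.ofReal K := by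
      have : ∫⁻ ω, ENNReal.ofReal (Y ω) ∂P = ∫⁻ ω, ENNReal.ofReal (X i ω) ∂P :=
        lintegral_congr_ae (hXY.mono fun ω h => by simp [h])
      rw [this, ← ofReal_integral_eq_lintegral_ofReal (hXint i) (hXnn i)]
      exact ENNReal.ofReal_le_ofReal (hK i)
    have hmarkov : ENNReal.ofReal l * P {ω | ENNReal.ofReal l ≤ ENNReal.ofReal (Y ω)} ≤
        ∫⁻ ω, ENNReal.ofReal (Y ω) ∂P :=
      mul_meas_ge_le_lintegral₀ (by exact (ENNReal.measurable_ofReal.comp hYm).aemeasurable) _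
    have hsub : B3 ⊆ {ω | ENNReal.ofReal l ≤ ENNReal.ofReal (Y ω)} :=
      fun ω hω => ENNReal.ofReal_le_ofReal (le_of_lt hω)
    have hl0 : ENNReal.ofReal l ≠ 0 := by simp [ENNReal.ofReal_eq_zero, not_le, hl]
    have : P B3 ≤ ENNReal.ofReal K / ENNReal.ofReal l := by
      rw [ENNReal.le_div_iff_mul_le (Or.inl hl0) (Or.inl ENNReal.ofReal_ne_top), mul_comm]
      exact le_trans (mul_le_mul_right (measure_mono hsub) _) (hmarkov.trans hlint)
    calc P B3 ≤ ENNReal.ofReal K / ENNReal.ofReal l := this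
      _ = ENNReal.ofReal (K / l) := (ENNReal.ofReal_div_of_pos hl).symm
      _ = ENNReal.ofReal m := by
          congr 1
          field_simp [hl_def]
          rw [hl_def, div_mul_cancel₀ K hm.ne']
  -- set integral bounds
  have hI2 : ∫ ω in B2, X i ω ∂P ≤ e := hui B2 hB2m e he i hPB2
  have hI3 : ∫ ω in B3, X i ω ∂P ≤ e := hui B3 hB3m e he i hPB3
  have hI1 : ∫ ω in B1, X i ω ∂P ≤ e := by
    have : ∫ ω in B1, X i ω ∂P ≤ ∫ _ in B1, e ∂P := by
      apply setIntegral_mono_ae_restrict ((hXint i).restrict) (integrable_const _)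
      refine (ae_restrict_iff' hB1m).2 ?_
      filter_upwards [hXY] with ω hxy hmem
      rw [hxy]; exact le_of_lt hmem
    calc ∫ ω in B1, X i ω ∂P ≤ ∫ _ in B1, e ∂P := this
      _ = (P B1).toReal * e := by rw [setIntegral_const, smul_eq_mul]; rfl
      _ ≤ 1 * e := by
          apply mul_le_mul_of_nonneg_right _ he.le
          exact ENNReal.toReal_le_of_le_ofReal one_pos.le (by simpa using prob_le_one)
      _ = e := one_mul e
  -- combine
  have hcover : ∫ ω, X i ω ∂P ≤ (∫ ω in B1, X i ω ∂P) + (∫ ω in B2, X i ω ∂P) + (∫ ω in B3, X i ω ∂P) := by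
    have hBc : B1ᶜ ⊆ B2 ∪ B3 := by
      intro ω h
      simp only [Set.mem_compl_iff, Set.mem_setOf_eq, not_lt, Set.mem_union, Set.mem_Icc,
        hB1_def, hB2_def, hB3_def] at h ⊢
      rcases le_or_gt (Y ω) l with h2 | h2
      · exact Or.inl ⟨h, h2⟩
      · exact Or.inr h2
    have hsplit : ∫ ω, X i ω ∂P = (∫ ω in B1, X i ω ∂P) + (∫ ω in B1ᶜ, X i ω ∂P) :=
      (integral_add_compl hB1m (hXint i)).symm
    have hunion : ∫ ω in B1ᶜ, X i ω ∂P ≤ (∫ ω in B2, X i ω ∂P) + (∫ ω in B3, X i ω ∂P) := by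
      have hmono : ∫ ω in B1ᶜ, X i ω ∂P ≤ ∫ ω in B2 ∪ B3, X i ω ∂P :=
        setIntegral_mono_set ((hXint i).integrableOn)
          (ae_restrict_of_ae (hXnn i)) (HasSubset.Subset.eventuallyLE hBc)
      have hdisj : ∀ ω ∈ B2 ∩ B3, False := by
        rintro ω ⟨h2, h3⟩
        exact absurd h2.2 (not_le.2 h3)
      have : ∫ ω in B2 ∪ B3, X i ω ∂P = (∫ ω in B2, X i ω ∂P) + (∫ ω in B3, X i ω ∂P) := by
        apply setIntegral_union _ hB3m ((hXint i).integrableOn) ((hXint i).integrableOn)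
        exact Set.disjoint_left.2 fun ω h2 h3 => hdisj ω ⟨h2, h3⟩
      linarith
    linarith
  have : (3:ℝ) * e < ε := by rw [he_def]; linarith
  linarith
end

section
/- Let (Ω,F,P) be a probability space, I a nonempty index set, and (X_i)_{i∈I}, (V_i)_{i∈I} two families of nonnegative real-valued random variables such that for all i ∈ I, almost surely: for all ε, l > 0, if X_i ∈ [ε, l] then V_i ≥ π(ε, l), where π : (0,∞)² → (0,∞). Suppose K > 0 satisfies X_i ≤ K almost surely for all i ∈ I, and each X_i is integrable. Define τ(ε) := π(ε/2, K) · ε/(2K). Then for all i ∈ I and all ε > 0: if E[V_i] < τ(ε) then E[X_i] < ε. -/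
open MeasureTheory Filter Topology
open scoped ENNReal

/-- Regularity modulus in expectation from a pointwise modulus `π` when the family `(X_i)` is
almost surely bounded by `K`: with `τ(ε) := π(ε/2, K)·ε/(2K)`, `E[V_i] < τ(ε)` implies
`E[X_i] < ε`. (The expectation `E[V_i]` is taken as the possibly infinite Lebesgue integral.) -/
theorem regularity_modulus_bounded_case
    {Ω : Type*} {mΩ : MeasurableSpace Ω} {P : Measure Ω} [IsProbabilityMeasure P]
    {I : Type*} [Nonempty I] (X V : I → Ω → ℝ)
    (hXnn : ∀ i, ∀ᵐ ω ∂P, 0 ≤ X i ω) (hVnn : ∀ i, ∀ᵐ ω ∂P, 0 ≤ V i ω)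
    (hXint : ∀ i, Integrable (X i) P)
    (π : ℝ → ℝ → ℝ) (hπpos : ∀ ε > (0:ℝ), ∀ l > (0:ℝ), 0 < π ε l)
    -- almost surely: X_i ∈ [ε, l] → V_i ≥ π(ε, l), for all ε, l > 0
    (hπ : ∀ i, ∀ᵐ ω ∂P, ∀ ε > (0:ℝ), ∀ l > (0:ℝ),
        X i ω ∈ Set.Icc ε l → π ε l ≤ V i ω)
    (K : ℝ) (hKpos : 0 < K)
    -- X_i ≤ K almost surely, for all i
    (hK : ∀ i, ∀ᵐ ω ∂P, X i ω ≤ K) :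
    ∀ i, ∀ ε > (0:ℝ),
      (∫⁻ ω, ENNReal.ofReal (V i ω) ∂P)
          < ENNReal.ofReal (π (ε/2) K * (ε / (2*K))) →
      ∫ ω, X i ω ∂P < ε := by
  intro i ε hε h
  set c := π (ε/2) K with hc
  have hcpos : 0 < c := hπpos _ (by linarith) _ hKpos
  have hg := (hXint i).1
  set g := hg.mk (X i) with hgdef
  have hgm : Measurable g := hg.measurable_mk
  have hXg : ∀ᵐ ω ∂P, X i ω = g ω := hg.ae_eq_mk
  set A : Set Ω := {ω | ε/2 ≤ g ω} with hA
  have hAm : MeasurableSet A := measurableSet_le measurable_const hgm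
  -- lower bound the lintegral of V by c * P A
  have hlb : ENNReal.ofReal c * P A ≤ ∫⁻ ω, ENNReal.ofReal (V i ω) ∂P := by
    rw [← MeasureTheory.lintegral_indicator_const hAm]
    refine lintegral_mono_ae ?_
    filter_upwards [hπ i, hK i, hVnn i, hXg] with ω hπω hKω hVω hXgω
    by_cases hω : ω ∈ A
    · rw [Set.indicator_of_mem hω]
      exact ENNReal.ofReal_le_ofReal
        (hπω (ε/2) (by linarith) K hKpos ⟨by rw [hXgω]; exact hω, hKω⟩)
    · rw [Set.indicator_of_notMem hω]; exact zero_le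
  have hPA : P A < ENNReal.ofReal (ε / (2*K)) := by
    have h2 : ENNReal.ofReal c * P A < ENNReal.ofReal c * ENNReal.ofReal (ε / (2*K)) := by
      calc ENNReal.ofReal c * P A ≤ _ := hlb
        _ < ENNReal.ofReal (c * (ε / (2*K))) := h
        _ = ENNReal.ofReal c * ENNReal.ofReal (ε / (2*K)) :=
          ENNReal.ofReal_mul hcpos.le
    exact lt_of_mul_lt_mul_left h2 (by positivity)
  have hPAr : (P A).toReal < ε / (2*K) := ENNReal.toReal_lt_of_lt_ofReal hPA
  -- upper bound the integral of X
  have hupper : ∫ ω, X i ω ∂P ≤ ∫ ω, (ε/2 + A.indicator (fun _ => K) ω) ∂P := by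
    refine integral_mono_ae (hXint i)
      ((integrable_const (ε/2)).add ((integrable_const K).indicator hAm)) ?_
    filter_upwards [hK i, hXg] with ω hKω hXgω
    by_cases hω : ω ∈ A
    · simp only [Set.indicator_of_mem hω]; linarith
    · simp only [Set.indicator_of_notMem hω, add_zero]
      have : g ω < ε/2 := lt_of_not_ge hω
      linarith [hXgω ▸ this]
  have hint : ∫ ω, (ε/2 + A.indicator (fun _ => K) ω) ∂P
      = ε/2 + (P A).toReal * K := by
    rw [integral_add (integrable_const _) ((integrable_const K).indicator hAm),
      integral_const, integral_indicator_const _ hAm]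
    simp [mul_comm]
    left; rfl
  have : (P A).toReal * K < ε/2 := by
    have := mul_lt_mul_of_pos_right hPAr hKpos
    calc (P A).toReal * K < ε / (2*K) * K := this
      _ = ε/2 := by field_simp
  calc ∫ ω, X i ω ∂P ≤ _ := hupper
    _ = ε/2 + (P A).toReal * K := hint
    _ < ε := by linarith
end

section
/- Let (x_n), (α_n), (β_n), (γ_n) be sequences of nonnegative real numbers with x_{n+1} ≤ (1+α_n)·x_n − β_n + γ_n for all n ∈ ℕ. If ∏_{i=0}^∞ (1+α_i) < ∞ and Σ_{i=0}^∞ γ_i < ∞, then (x_n) converges and Σ_{i=0}^∞ β_i < ∞. Moreover, if K, L, M > 0 satisfy x_0 < K, ∏_{i=0}^∞ (1+α_i) < L and Σ_{i=0}^∞ γ_i < M, then Σ_{i=0}^∞ β_i < L·(K + M). -/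
open Filter Topology

/-- Quantitative version of Qihou's lemma (non-stochastic analogue of the Robbins-Siegmund
theorem): if `x_{n+1} ≤ (1+α_n)x_n − β_n + γ_n` with `∏(1+α_i) < ∞` and `Σγ_i < ∞`, then `(x_n)`
converges and `Σβ_i < ∞`; moreover, if `x_0 < K`, `∏(1+α_i) < L` and `Σγ_i < M`, then
`Σβ_i < L(K+M)`. -/
theorem qihou_lemma_quantitative
    (x α β γ : ℕ → ℝ)
    (hx : ∀ n, 0 ≤ x n) (hα : ∀ n, 0 ≤ α n) (hβ : ∀ n, 0 ≤ β n) (hγ : ∀ n, 0 ≤ γ n)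
    (hrec : ∀ n, x (n+1) ≤ (1 + α n) * x n - β n + γ n)
    (hprod : ∃ l : ℝ, Tendsto (fun n => ∏ i ∈ Finset.range n, (1 + α i)) atTop (𝓝 l))
    (hγsum : Summable γ) :
    (∃ l : ℝ, Tendsto x atTop (𝓝 l)) ∧ Summable β ∧
    (∀ K L M : ℝ, 0 < K → 0 < L → 0 < M → x 0 < K →
      (∃ l : ℝ, l < L ∧ Tendsto (fun n => ∏ i ∈ Finset.range n, (1 + α i)) atTop (𝓝 l)) →
      (∑' i, γ i) < M →
      (∑' i, β i) < L * (K + M)) := by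
  set P : ℕ → ℝ := fun n => ∏ i ∈ Finset.range n, (1 + α i) with hPdef
  have hP1 : ∀ n, 1 ≤ P n := by
    intro n
    induction n with
    | zero => simp [hPdef]
    | succ n ih =>
      have : P (n+1) = P n * (1 + α n) := Finset.prod_range_succ _ n
      rw [this]
      nlinarith [hα n]
  have hPpos : ∀ n, 0 < P n := fun n => lt_of_lt_of_le one_pos (hP1 n)
  have hPsucc : ∀ n, P (n+1) = P n * (1 + α n) := fun n => Finset.prod_range_succ _ n
  have hPmono : Monotone P := monotone_nat_of_le_succ (fun n => by
    rw [hPsucc]; nlinarith [hPpos n, hα n])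
  obtain ⟨l, hl⟩ := hprod
  have hlP : ∀ n, P n ≤ l := fun n => hPmono.ge_of_tendsto hl n
  have hl1 : 1 ≤ l := le_trans (hP1 0) (hlP 0)
  set y : ℕ → ℝ := fun n => x n / P n with hydef
  set b : ℕ → ℝ := fun n => β n / P (n+1) with hbdef
  set g : ℕ → ℝ := fun n => γ n / P (n+1) with hgdef
  have hb0 : ∀ n, 0 ≤ b n := fun n => div_nonneg (hβ n) (hPpos _).le
  have hg0 : ∀ n, 0 ≤ g n := fun n => div_nonneg (hγ n) (hPpos _).le
  have hy0 : ∀ n, 0 ≤ y n := fun n => div_nonneg (hx n) (hPpos _).le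
  have hy00 : y 0 = x 0 := by
    simp [hydef, hPdef]
  have hkey : ∀ n, y (n+1) ≤ y n - b n + g n := by
    intro n
    have hp1 : 0 < P (n+1) := hPpos (n+1)
    have h1 : x (n+1) / P (n+1) ≤ ((1 + α n) * x n - β n + γ n) / P (n+1) :=
      (div_le_div_iff_of_pos_right hp1).mpr (hrec n)
    have heq : ((1 + α n) * x n - β n + γ n) / P (n+1) = y n - b n + g n := by
      have hpn : (P n) ≠ 0 := (hPpos n).ne'
      have ha : (1 : ℝ) + α n ≠ 0 := by linarith [hα n]
      simp only [hydef, hbdef, hgdef, hPsucc n]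
      field_simp
    simpa [hydef, heq] using h1
  -- telescoping bound
  have htel : ∀ n, y n + ∑ i ∈ Finset.range n, b i ≤ y 0 + ∑ i ∈ Finset.range n, g i := by
    intro n
    induction n with
    | zero => simp
    | succ n ih =>
      rw [Finset.sum_range_succ, Finset.sum_range_succ]
      have := hkey n
      linarith
  have hgsum : Summable g :=
    Summable.of_nonneg_of_le hg0 (fun n => div_le_self (hγ n) (hP1 _)) hγsum
  have hgle : ∀ n, ∑ i ∈ Finset.range n, g i ≤ ∑' i, g i := fun n =>
    Summable.sum_le_tsum _ (fun i _ => hg0 i) hgsum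
  have hbsumle : ∀ n, ∑ i ∈ Finset.range n, b i ≤ x 0 + ∑' i, g i := by
    intro n
    have := htel n
    have := hgle n
    have := hy0 n
    linarith [hy00 ▸ htel n]
  have hbsum : Summable b := summable_of_sum_range_le hb0 hbsumle
  have hβle : ∀ n, β n ≤ l * b n := by
    intro n
    have h1 : β n = b n * P (n+1) := by
      simp only [hbdef]
      rw [div_mul_cancel₀ _ (hPpos (n+1)).ne']
    have h2 : b n * P (n+1) ≤ b n * l := mul_le_mul_of_nonneg_left (hlP _) (hb0 n)
    rw [h1]; linarith [h2]
  have hβsum : Summable β := Summable.of_nonneg_of_le hβ hβle (hbsum.mul_left l)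
  -- convergence of x
  set w : ℕ → ℝ := fun n =>
    y n + ∑ i ∈ Finset.range n, b i - ∑ i ∈ Finset.range n, g i with hwdef
  have hwanti : Antitone w := antitone_nat_of_succ_le (fun n => by
    simp only [hwdef, Finset.sum_range_succ]
    have := hkey n
    linarith)
  have hwbdd : BddBelow (Set.range w) := by
    refine ⟨-(∑' i, g i), ?_⟩
    rintro _ ⟨n, rfl⟩
    have h1 := hgle n
    have h2 := hy0 n
    have h3 : (0:ℝ) ≤ ∑ i ∈ Finset.range n, b i :=
      Finset.sum_nonneg (fun i _ => hb0 i)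
    simp only [hwdef]
    linarith
  have hwtend : Tendsto w atTop (𝓝 (⨅ n, w n)) := tendsto_atTop_ciInf hwanti hwbdd
  have hbtend : Tendsto (fun n => ∑ i ∈ Finset.range n, b i) atTop (𝓝 (∑' i, b i)) :=
    hbsum.hasSum.tendsto_sum_nat
  have hgtend : Tendsto (fun n => ∑ i ∈ Finset.range n, g i) atTop (𝓝 (∑' i, g i)) :=
    hgsum.hasSum.tendsto_sum_nat
  have hytend : Tendsto y atTop (𝓝 ((⨅ n, w n) - ∑' i, b i + ∑' i, g i)) := by
    have : y = fun n => w n - ∑ i ∈ Finset.range n, b i + ∑ i ∈ Finset.range n, g i := by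
      funext n; simp only [hwdef]; ring
    rw [this]
    exact (hwtend.sub hbtend).add hgtend
  have hxy : x = fun n => y n * P n := by
    funext n
    simp only [hydef]
    rw [div_mul_cancel₀ _ (hPpos n).ne']
  have hxtend : Tendsto x atTop (𝓝 (((⨅ n, w n) - ∑' i, b i + ∑' i, g i) * l)) := by
    rw [hxy]
    exact hytend.mul hl
  refine ⟨⟨_, hxtend⟩, hβsum, ?_⟩
  -- quantitative bound
  intro K L M hK hL hM hx0 hLl hγM
  obtain ⟨l', hl'L, hl'tend⟩ := hLl
  obtain rfl : l = l' := tendsto_nhds_unique hl hl'tend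
  have h1 : (∑' i, β i) ≤ ∑' i, l * b i := Summable.tsum_le_tsum hβle hβsum (hbsum.mul_left l)
  have h2 : (∑' i, l * b i) = l * ∑' i, b i := tsum_mul_left
  have h3 : (∑' i, b i) ≤ x 0 + ∑' i, g i := Summable.tsum_le_of_sum_range_le hbsum hbsumle
  have h4 : (∑' i, g i) ≤ ∑' i, γ i :=
    Summable.tsum_le_tsum (fun n => div_le_self (hγ n) (hP1 _)) hgsum hγsum
  have h5 : (0:ℝ) ≤ ∑' i, γ i := tsum_nonneg hγ
  have h6 : (0:ℝ) ≤ x 0 := hx 0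
  have hl0 : (0:ℝ) < l := lt_of_lt_of_le one_pos hl1
  nlinarith [mul_le_mul_of_nonneg_left (add_le_add hx0.le (lt_of_le_of_lt h4 hγM).le) hl0.le,
    mul_lt_mul_of_pos_right hl'L (by linarith : (0:ℝ) < K + M),
    mul_le_mul_of_nonneg_left (add_le_add h6 h5) hl0.le]
end

section
/- Let (Ω,F,P) be a probability space with a filtration (F_n), let (X_n), (V_n), (C_n) be sequences of nonnegative integrable real-valued random variables adapted to (F_n), and let (a_n), (u_n) be sequences of nonnegative reals. Suppose E[X_{n+1} | F_n] ≤ (1+a_n)·X_n − u_n·V_n + C_n almost surely for all n ∈ ℕ. Suppose there exist K, L, M > 0 with E[X_0] < L, ∏_{i=0}^∞ (1+a_i) < K and Σ_{i=0}^∞ E[C_i] < M, and functions χ : (0,∞) → ℕ and θ : ℕ × (0,∞) → ℕ such that Σ_{i=k}^{θ(k,b)} u_i ≥ b for all b > 0 and k ∈ ℕ, and Σ_{i=χ(ε)}^∞ E[C_i] < ε for all ε > 0. Finally, suppose τ : (0,∞) → (0,∞) satisfies: for all ε > 0 and all n ∈ ℕ, E[V_n] < τ(ε) implies E[f(X_n)]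 < ε, where f : [0,∞) → [0,∞) is s.i.c.c. with moduli ψ and κ. Then: (a) E[f(X_n)] < ε for all n ≥ ρ(ε) := θ(χ(κ(ε')), K·(L+M)/τ(ε')) where ε' := ε·ψ(K⁻¹)/2; and (b) for all λ, ε > 0, P(∃ n ≥ ρ'(λ,ε), X_n ≥ ε) < λ, where ρ'(λ,ε) := ρ(λ·f(ε)). -/
open MeasureTheory Filter Topology
open scoped ENNReal

structure SICC (f ψ κ : ℝ → ℝ) : Prop where
  supermult : ∀ x ≥ (0:ℝ), ∀ a ∈ Set.Icc (0:ℝ) 1, f x * ψ a ≤ f (x * a)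
  psi_mem : ∀ a ∈ Set.Icc (0:ℝ) 1, ψ a ∈ Set.Icc (0:ℝ) 1
  psi_pos : ∀ a ∈ Set.Ioc (0:ℝ) 1, 0 < ψ a
  nonneg : ∀ x ≥ (0:ℝ), 0 ≤ f x
  strictMonoOn : StrictMonoOn f (Set.Ici 0)
  concaveOn : ConcaveOn ℝ (Set.Ici 0) f
  continuousOn : ContinuousOn f (Set.Ici 0)
  map_zero : f 0 = 0
  kappa_pos : ∀ ε > (0:ℝ), 0 < κ ε
  kappa_mod : ∀ x ≥ (0:ℝ), ∀ ε > (0:ℝ), x < κ ε → f x < ε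

noncomputable def rsl (f : ℝ → ℝ) (q : ℝ) : ℝ :=
  sSup ((fun y => (f y - f q) / (y - q)) '' Set.Ioi q)

namespace SICC

variable {f ψ κ : ℝ → ℝ} (hf : SICC f ψ κ)
include hf

lemma mono : MonotoneOn f (Set.Ici 0) := hf.strictMonoOn.monotoneOn

lemma slope_anti {x q y : ℝ} (hx : 0 ≤ x) (hxq : x < q) (hqy : q < y) :
    (f y - f q) / (y - q) ≤ (f q - f x) / (q - x) := by
  have := hf.concaveOn.slope_anti_adjacent (x := x) (y := q) (z := y) hx
    (le_trans hx (le_of_lt (hxq.trans hqy))) hxq hqy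
  simpa [slope_def_field] using this

lemma rsl_bddAbove {q : ℝ} (hq : 0 < q) :
    BddAbove ((fun y => (f y - f q) / (y - q)) '' Set.Ioi q) := by
  refine ⟨(f q - f (q/2)) / (q - q/2), ?_⟩
  rintro z ⟨y, hy, rfl⟩
  exact hf.slope_anti (by linarith) (by linarith) hy

lemma rsl_nonneg {q : ℝ} (hq : 0 < q) : 0 ≤ rsl f q := by
  have hmono : f q ≤ f (q + 1) := hf.mono (Set.mem_Ici.mpr hq.le) (Set.mem_Ici.mpr (by linarith)) (by linarith)
  have h1 : 0 ≤ (f (q+1) - f q) / ((q+1) - q) :=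
    div_nonneg (sub_nonneg.mpr hmono) (by norm_num)
  exact h1.trans (le_csSup (hf.rsl_bddAbove hq) ⟨q + 1, by simp [Set.mem_Ioi], rfl⟩)

lemma tangent {q : ℝ} (hq : 0 < q) {x : ℝ} (hx : 0 ≤ x) :
    f x ≤ f q + rsl f q * (x - q) := by
  rcases lt_trichotomy x q with h | h | h
  · have hle : rsl f q ≤ (f q - f x) / (q - x) := by
      refine csSup_le (⟨(f (q+1) - f q) / (q + 1 - q), ⟨q+1, by simp [Set.mem_Ioi], rfl⟩⟩) ?_
      rintro z ⟨y, hy, rfl⟩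
      exact hf.slope_anti hx h hy
    have hqx : 0 < q - x := by linarith
    have := mul_le_mul_of_nonneg_right hle hqx.le
    rw [div_mul_cancel₀ _ hqx.ne'] at this
    nlinarith
  · simp [h]
  · have hmem : (f x - f q) / (x - q) ≤ rsl f q :=
      le_csSup (hf.rsl_bddAbove hq) ⟨x, h, rfl⟩
    have hxq : 0 < x - q := by linarith
    have := mul_le_mul_of_nonneg_right hmem hxq.le
    rw [div_mul_cancel₀ _ hxq.ne'] at this
    linarith

lemma subadd {x y : ℝ} (hx : 0 ≤ x) (hy : 0 ≤ y) : f (x + y) ≤ f x + f y := by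
  rcases eq_or_lt_of_le (add_nonneg hx hy) with h | h
  · have hx0 : x = 0 := by linarith
    have hy0 : y = 0 := by linarith
    simp [hx0, hy0, hf.map_zero, le_of_eq]
  · have key : ∀ z ≥ (0:ℝ), z ≤ x + y → z / (x+y) * f (x+y) ≤ f z := by
      intro z hz hzle
      have ha : 0 ≤ z / (x+y) := by positivity
      have hb : 0 ≤ 1 - z / (x+y) := by
        have : z / (x+y) ≤ 1 := by rw [div_le_one h]; linarith
        linarith
      have hcc := hf.concaveOn.2 (show (x+y) ∈ Set.Ici (0:ℝ) from le_of_lt h)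
        (Set.mem_Ici.mpr le_rfl) ha hb (by ring)
      have hpt : (z/(x+y)) • (x+y) + (1 - z/(x+y)) • (0:ℝ) = z := by
        rw [smul_eq_mul, smul_eq_mul, mul_zero, add_zero, div_mul_cancel₀ _ h.ne']
      rw [hpt, hf.map_zero, smul_zero, add_zero, smul_eq_mul] at hcc
      exact hcc
    have hx' := key x hx (by linarith)
    have hy' := key y hy (by linarith)
    have hsum : x/(x+y) + y/(x+y) = 1 := by field_simp
    calc f (x+y) = (x/(x+y) + y/(x+y)) * f (x+y) := by rw [hsum, one_mul]
      _ = x/(x+y) * f (x+y) + y/(x+y) * f (x+y) := by ring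
      _ ≤ f x + f y := add_le_add hx' hy'

end SICC

noncomputable def gf (f : ℝ → ℝ) : ℝ → ℝ := fun x => f (max x 0)

namespace SICC

variable {f ψ κ : ℝ → ℝ} (hf : SICC f ψ κ)
include hf

lemma gf_nonneg (x : ℝ) : 0 ≤ gf f x := hf.nonneg _ (le_max_right _ _)

lemma gf_eq {x : ℝ} (hx : 0 ≤ x) : gf f x = f x := by simp [gf, max_eq_left hx]

lemma gf_mono : Monotone (gf f) := fun x y hxy =>
  hf.mono (Set.mem_Ici.mpr (le_max_right _ _)) (Set.mem_Ici.mpr (le_max_right _ _)) (max_le_max hxy le_rfl)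

lemma gf_cont : Continuous (gf f) :=
  hf.continuousOn.comp_continuous (continuous_id.max continuous_const)
    (fun x => Set.mem_Ici.mpr (le_max_right _ _))

lemma gf_le_affine (x : ℝ) : gf f x ≤ f 1 + rsl f 1 * |x| := by
  have h := hf.tangent one_pos (x := max x 0) (le_max_right _ _)
  have h2 : rsl f 1 * (max x 0 - 1) ≤ rsl f 1 * |x| := by
    refine mul_le_mul_of_nonneg_left ?_ (hf.rsl_nonneg one_pos)
    have h3 : max x 0 ≤ |x| := max_le (le_abs_self x) (abs_nonneg x)
    linarith
  calc gf f x ≤ f 1 + rsl f 1 * (max x 0 - 1) := h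
    _ ≤ f 1 + rsl f 1 * |x| := by linarith

end SICC

namespace SICC

variable {f ψ κ : ℝ → ℝ} (hf : SICC f ψ κ)
include hf

lemma integrable_gf {Ω : Type*} {m : MeasurableSpace Ω} {P : Measure Ω} [IsFiniteMeasure P]
    {Y : Ω → ℝ} (hY : Integrable Y P) : Integrable (fun ω => gf f (Y ω)) P := by
  have haesm : AEStronglyMeasurable (fun ω => gf f (Y ω)) P :=
    hf.gf_cont.comp_aestronglyMeasurable hY.1
  refine Integrable.mono' ((integrable_const (f 1)).add (hY.abs.const_mul (rsl f 1))) haesm ?_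
  filter_upwards with ω
  rw [Real.norm_of_nonneg (hf.gf_nonneg _)]
  exact hf.gf_le_affine (Y ω)

lemma cond_jensen {Ω : Type*} {m : MeasurableSpace Ω} {P : Measure Ω} [IsProbabilityMeasure P]
    {m' : MeasurableSpace Ω} (hm' : m' ≤ m) {Y Z : Ω → ℝ}
    (hYint : Integrable Y P) (hZint : Integrable Z P)
    (hYnn : 0 ≤ᵐ[P] Y) (hZnn : 0 ≤ᵐ[P] Z)
    (hle : P[Y|m'] ≤ᵐ[P] Z) :
    P[fun ω => gf f (Y ω)|m'] ≤ᵐ[P] fun ω => gf f (Z ω) := by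
  have hgfint : Integrable (fun ω => gf f (Y ω)) P := hf.integrable_gf hYint
  -- for each positive rational q, a tangent-line bound
  have hq_bound : ∀ q : {q : ℚ // 0 < (q:ℝ)}, P[fun ω => gf f (Y ω)|m'] ≤ᵐ[P]
      fun ω => rsl f (q:ℝ) * Z ω + (f (q:ℝ) - rsl f (q:ℝ) * (q:ℝ)) := by
    intro q
    set c : ℝ := rsl f (q:ℝ) with hc
    set d : ℝ := f (q:ℝ) - c * (q:ℝ) with hd
    have hcnn : 0 ≤ c := hf.rsl_nonneg q.2
    have hAint : Integrable (fun ω => c * Y ω + d) P :=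
      (hYint.const_mul c).add (integrable_const d)
    have htan : (fun ω => gf f (Y ω)) ≤ᵐ[P] fun ω => c * Y ω + d := by
      filter_upwards [hYnn] with ω hω
      rw [hf.gf_eq hω]
      have := hf.tangent q.2 hω
      linarith [this]
    have h1 : P[fun ω => gf f (Y ω)|m'] ≤ᵐ[P] P[fun ω => c * Y ω + d|m'] :=
      condExp_mono hgfint hAint htan
    have h2 : P[fun ω => c * Y ω + d|m'] =ᵐ[P] fun ω => c * (P[Y|m']) ω + d := by
      have e1 : (fun ω => c * Y ω + d) = (c • Y) + (fun _ => d) := rfl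
      rw [e1]
      calc P[(c • Y) + (fun _ => d)|m']
          =ᵐ[P] P[c • Y|m'] + P[(fun _ => d)|m'] :=
            condExp_add (hYint.smul c) (integrable_const d) m'
        _ =ᵐ[P] fun ω => c * (P[Y|m']) ω + d := by
            have h := condExp_smul (μ := P) (m := m') c Y
            filter_upwards [h] with ω hω
            simp only [Pi.add_apply, condExp_const hm' d, hω, Pi.smul_apply, smul_eq_mul]
    refine (h1.trans h2.le).trans ?_
    filter_upwards [hle] with ω hω
    have := mul_le_mul_of_nonneg_left hω hcnn
    simp only [hd]
    nlinarith
  have haea : ∀ᵐ ω ∂P, ∀ q : {q : ℚ // 0 < (q:ℝ)},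
      (P[fun ω' => gf f (Y ω')|m']) ω ≤ rsl f (q:ℝ) * Z ω + (f (q:ℝ) - rsl f (q:ℝ) * (q:ℝ)) :=
    ae_all_iff.mpr hq_bound
  filter_upwards [haea, hZnn] with ω hall hZ
  rw [hf.gf_eq hZ]
  set x := Z ω with hx
  set G := (P[fun ω' => gf f (Y ω')|m']) ω with hG
  have hseq : ∀ n : ℕ, ∃ q : ℚ, x < (q:ℝ) ∧ (q:ℝ) < x + 1/(n+1) := by
    intro n
    have h01 : (0:ℝ) < 1/((n:ℝ)+1) := by positivity
    exact_mod_cast exists_rat_btwn (by linarith : x < x + 1/((n:ℝ)+1))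
  choose qs hq1 hq2 using hseq
  have hq0 : ∀ n, 0 < ((qs n):ℝ) := fun n => lt_of_le_of_lt hZ (hq1 n)
  have hbound : ∀ n, G ≤ f (qs n) := by
    intro n
    have h := hall ⟨qs n, hq0 n⟩
    have hrn : 0 ≤ rsl f ((qs n):ℝ) := hf.rsl_nonneg (hq0 n)
    have hxq : x - (qs n) ≤ 0 := by linarith [hq1 n]
    nlinarith [h]
  have htend : Tendsto (fun n : ℕ => ((qs n):ℝ)) atTop (𝓝 x) := by
    refine tendsto_of_tendsto_of_tendsto_of_le_of_le tendsto_const_nhds ?_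
      (fun n => (hq1 n).le) (fun n => (hq2 n).le)
    have h := Tendsto.add (tendsto_const_nhds : Tendsto (fun _ : ℕ => x) atTop (𝓝 x))
      tendsto_one_div_add_atTop_nhds_zero_nat
    simpa using h
  have hftend : Tendsto (fun n => f ((qs n):ℝ)) atTop (𝓝 (f x)) := by
    have hcw : ContinuousWithinAt f (Set.Ici 0) x := hf.continuousOn x (Set.mem_Ici.mpr hZ)
    refine hcw.tendsto.comp ?_
    rw [tendsto_nhdsWithin_iff]
    exact ⟨htend, Filter.Eventually.of_forall fun n => Set.mem_Ici.mpr (hq0 n).le⟩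
  exact ge_of_tendsto hftend (Filter.Eventually.of_forall hbound)

end SICC

lemma MeasureTheory.StronglyMeasurable.div_const' {α : Type*} {mα : MeasurableSpace α} {f : α → ℝ}
    (hf : MeasureTheory.StronglyMeasurable f) (c : ℝ) :
    MeasureTheory.StronglyMeasurable (fun x => f x / c) := by
  simpa [div_eq_mul_inv] using hf.mul_const c⁻¹

set_option maxHeartbeats 1600000

/-- Quantitative variant of the Robbins-Siegmund theorem: rates of convergence in mean for
`f(X_n)` and of almost sure convergence for `X_n` under the almost-supermartingale condition
`E[X_{n+1}|F_n] ≤ (1+a_n)X_n − u_n V_n + C_n` and a regularity modulus `τ`. -/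
theorem robbins_siegmund_quantitative
    {Ω : Type*} {m : MeasurableSpace Ω} {P : Measure Ω} [IsProbabilityMeasure P]
    (ℱ : Filtration ℕ m) (X V C : ℕ → Ω → ℝ)
    (hXadp : Adapted ℱ X) (hVadp : Adapted ℱ V) (hCadp : Adapted ℱ C)
    (hXnn : ∀ n, 0 ≤ᵐ[P] X n) (hVnn : ∀ n, 0 ≤ᵐ[P] V n) (hCnn : ∀ n, 0 ≤ᵐ[P] C n)
    (hXint : ∀ n, Integrable (X n) P) (hVint : ∀ n, Integrable (V n) P)
    (hCint : ∀ n, Integrable (C n) P)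
    (a u : ℕ → ℝ) (hann : ∀ n, 0 ≤ a n) (hunn : ∀ n, 0 ≤ u n)
    -- the almost-supermartingale property
    (hrec : ∀ n, ∀ᵐ ω ∂P,
        (P[X (n+1) | ℱ n]) ω ≤ (1 + a n) * X n ω - u n * V n ω + C n ω)
    (K L M : ℝ) (hKpos : 0 < K) (hLpos : 0 < L) (hMpos : 0 < M)
    -- E[X_0] < L
    (hL : ∫ ω, X 0 ω ∂P < L)
    -- ∏_{i=0}^∞ (1+a_i) < K
    (hprod : ∃ l, l < K ∧ Tendsto (fun n => ∏ i ∈ Finset.range n, (1 + a i)) atTop (𝓝 l))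
    -- Σ_{i=0}^∞ E[C_i] < M
    (hCsum : Summable fun i => ∫ ω, C i ω ∂P)
    (hM : (∑' i, ∫ ω, C i ω ∂P) < M)
    -- θ is a rate of divergence for Σ u_i, χ a rate of convergence for Σ E[C_i]
    (χ : ℝ → ℕ) (θ : ℕ → ℝ → ℕ)
    (hθ : ∀ b > (0:ℝ), ∀ k : ℕ, b ≤ ∑ i ∈ Finset.Icc k (θ k b), u i)
    (hχ : ∀ ε > (0:ℝ), ∑' i : ℕ, ∫ ω, C (χ ε + i) ω ∂P < ε)
    -- regularity modulus τ relating (V_n) and (f(X_n)) in expectation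
    (f ψ κ : ℝ → ℝ) (hf : SICC f ψ κ)
    (τ : ℝ → ℝ) (hτpos : ∀ ε > (0:ℝ), 0 < τ ε)
    (hτ : ∀ ε > (0:ℝ), ∀ n : ℕ, ∫ ω, V n ω ∂P < τ ε → ∫ ω, f (X n ω) ∂P < ε) :
    -- (a) ρ(ε) := θ(χ(κ(ε')), K(L+M)/τ(ε')), ε' := ε·ψ(K⁻¹)/2, is a rate for E[f(X_n)] → 0
    (∀ ε > (0:ℝ), ∀ n ≥ θ (χ (κ (ε * ψ K⁻¹ / 2))) (K * (L + M) / τ (ε * ψ K⁻¹ / 2)),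
        ∫ ω, f (X n ω) ∂P < ε) ∧
    -- (b) ρ'(λ,ε) := ρ(λ·f(ε)) is a rate of almost sure convergence for X_n → 0
    (∀ lam > (0:ℝ), ∀ ε > (0:ℝ),
        P {ω | ∃ n, θ (χ (κ (lam * f ε * ψ K⁻¹ / 2)))
            (K * (L + M) / τ (lam * f ε * ψ K⁻¹ / 2)) ≤ n ∧ ε ≤ X n ω}
          < ENNReal.ofReal lam) := by
  classical
  obtain ⟨l, hlK, hl⟩ := hprod
  -- the partial products
  set p : ℕ → ℝ := fun n => ∏ i ∈ Finset.range n, (1 + a i) with hp_def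
  have hp_succ : ∀ n, p (n+1) = p n * (1 + a n) := fun n => by
    rw [hp_def]
    exact Finset.prod_range_succ _ n
  have hp_one : ∀ n, 1 ≤ p n := by
    intro n
    induction n with
    | zero => simp [hp_def]
    | succ n ih => rw [hp_succ n]; nlinarith [hann n]
  have hp_pos : ∀ n, 0 < p n := fun n => lt_of_lt_of_le one_pos (hp_one n)
  have hp_mono : Monotone p := monotone_nat_of_le_succ (fun n => by
    rw [hp_succ n]; nlinarith [hp_pos n, hann n])
  have hp_le : ∀ n, p n ≤ l := fun n => hp_mono.ge_of_tendsto hl n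
  have hp_K : ∀ n, p n < K := fun n => lt_of_le_of_lt (hp_le n) hlK
  have hK1 : 1 ≤ K := le_of_lt (lt_of_le_of_lt ((hp_one 0).trans (hp_le 0)) hlK)
  have hψpos : 0 < ψ K⁻¹ :=
    hf.psi_pos K⁻¹ ⟨inv_pos.mpr hKpos, inv_le_one_of_one_le₀ hK1⟩
  -- the positive parts
  set Xp : ℕ → Ω → ℝ := fun n ω => max (X n ω) 0 with hXp_def
  set Cp : ℕ → Ω → ℝ := fun n ω => max (C n ω) 0 with hCp_def
  have hXp_ae : ∀ n, Xp n =ᵐ[P] X n := fun n => by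
    filter_upwards [hXnn n] with ω h using max_eq_left h
  have hCp_ae : ∀ n, Cp n =ᵐ[P] C n := fun n => by
    filter_upwards [hCnn n] with ω h using max_eq_left h
  have hXp_nn : ∀ n ω, 0 ≤ Xp n ω := fun n ω => le_max_right _ _
  have hCp_nn : ∀ n ω, 0 ≤ Cp n ω := fun n ω => le_max_right _ _
  have hXp_int : ∀ n, Integrable (Xp n) P := fun n => by
    simpa using (hXint n).pos_part
  have hCp_int : ∀ n, Integrable (Cp n) P := fun n => by
    simpa using (hCint n).pos_part
  have hXp_sm : ∀ n, StronglyMeasurable[ℱ n] (Xp n) := fun n =>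
    (continuous_id.max continuous_const).comp_stronglyMeasurable (hXadp n).stronglyMeasurable
  have hCp_sm : ∀ n, StronglyMeasurable[ℱ n] (Cp n) := fun n =>
    (continuous_id.max continuous_const).comp_stronglyMeasurable (hCadp n).stronglyMeasurable
  -- expectations
  set cInt : ℕ → ℝ := fun i => ∫ ω, C i ω ∂P with hcInt_def
  have hcInt_nn : ∀ i, 0 ≤ cInt i := fun i => integral_nonneg_of_ae (hCnn i)
  have hvInt_nn : ∀ i, 0 ≤ ∫ ω, V i ω ∂P := fun i => integral_nonneg_of_ae (hVnn i)
  have hsInt_nn : ∀ i, 0 ≤ ∫ ω, X i ω ∂P := fun i => integral_nonneg_of_ae (hXnn i)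
  have hCpInt : ∀ i, ∫ ω, Cp i ω ∂P = cInt i := fun i => integral_congr_ae (hCp_ae i)
  -- the scalar recursion
  have hRHS_int : ∀ n, Integrable (fun ω => (1 + a n) * X n ω - u n * V n ω + C n ω) P :=
    fun n => (((hXint n).const_mul _).sub ((hVint n).const_mul _)).add (hCint n)
  have step1 : ∀ n, ∫ ω, X (n+1) ω ∂P ≤
      (1 + a n) * ∫ ω, X n ω ∂P - u n * ∫ ω, V n ω ∂P + cInt n := by
    intro n
    have h0 : ∫ ω, X (n+1) ω ∂P = ∫ ω, (P[X (n+1)|ℱ n]) ω ∂P :=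
      (integral_condExp (ℱ.le n)).symm
    have h1 : ∫ ω, (P[X (n+1)|ℱ n]) ω ∂P
        ≤ ∫ ω, ((1 + a n) * X n ω - u n * V n ω + C n ω) ∂P :=
      integral_mono_ae integrable_condExp (hRHS_int n) (hrec n)
    have hsub : Integrable (fun ω => (1 + a n) * X n ω - u n * V n ω) P :=
      ((hXint n).const_mul _).sub ((hVint n).const_mul _)
    have h2 : ∫ ω, ((1 + a n) * X n ω - u n * V n ω + C n ω) ∂P
        = (1 + a n) * ∫ ω, X n ω ∂P - u n * ∫ ω, V n ω ∂P + cInt n := by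
      rw [integral_add hsub (hCint n),
        integral_sub ((hXint n).const_mul _) ((hVint n).const_mul _),
        integral_const_mul, integral_const_mul]
    rw [h0]; rw [h2] at h1; exact h1
  have step2 : ∀ n, (∫ ω, X n ω ∂P) / p n
        + ∑ i ∈ Finset.range n, (u i * ∫ ω, V i ω ∂P) / p (i+1)
      ≤ (∫ ω, X 0 ω ∂P) + ∑ i ∈ Finset.range n, cInt i / p (i+1) := by
    intro n
    induction n with
    | zero => simp [hp_def]
    | succ n ih =>
      rw [Finset.sum_range_succ, Finset.sum_range_succ]
      have hpp : 0 < p (n+1) := hp_pos (n+1)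
      have h1an : (0:ℝ) < 1 + a n := by linarith [hann n]
      have h2 : ((∫ ω, X (n+1) ω ∂P) + u n * ∫ ω, V n ω ∂P) / p (n+1)
          ≤ ((1 + a n) * (∫ ω, X n ω ∂P) + cInt n) / p (n+1) := by
        apply div_le_div_of_nonneg_right ?_ hpp.le
        · linarith [step1 n]
      have e : ((1 + a n) * (∫ ω, X n ω ∂P) + cInt n) / p (n+1)
          = (∫ ω, X n ω ∂P) / p n + cInt n / p (n+1) := by
        rw [hp_succ n]
        rw [div_add_div _ _ (hp_pos n).ne' (mul_pos (hp_pos n) h1an).ne']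
        rw [div_eq_div_iff (mul_pos (hp_pos n) h1an).ne' (mul_pos (hp_pos n) (mul_pos (hp_pos n) h1an)).ne']
        ring
      rw [add_div] at h2
      rw [e] at h2
      linarith [ih, h2]
  have step3 : ∀ N, ∑ i ∈ Finset.range N, u i * ∫ ω, V i ω ∂P
      ≤ K * ((∫ ω, X 0 ω ∂P) + ∑' i, cInt i) := by
    intro N
    have hsum_c : ∑ i ∈ Finset.range N, cInt i / p (i+1) ≤ ∑' i, cInt i := by
      calc ∑ i ∈ Finset.range N, cInt i / p (i+1)
          ≤ ∑ i ∈ Finset.range N, cInt i :=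
            Finset.sum_le_sum fun i _ => div_le_self (hcInt_nn i) (hp_one (i+1))
        _ ≤ ∑' i, cInt i := Summable.sum_le_tsum _ (fun i _ => hcInt_nn i) hCsum
    have h2 : ∑ i ∈ Finset.range N, (u i * ∫ ω, V i ω ∂P) / p (i+1)
        ≤ (∫ ω, X 0 ω ∂P) + ∑' i, cInt i := by
      have hXN : 0 ≤ (∫ ω, X N ω ∂P) / p N := div_nonneg (hsInt_nn N) (hp_pos N).le
      linarith [step2 N]
    have h3 : ∑ i ∈ Finset.range N, u i * ∫ ω, V i ω ∂P
        ≤ K * ∑ i ∈ Finset.range N, (u i * ∫ ω, V i ω ∂P) / p (i+1) := by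
      rw [Finset.mul_sum]
      refine Finset.sum_le_sum fun i _ => ?_
      have hdiv : u i * (∫ ω, V i ω ∂P) / p (i+1) * p (i+1) = u i * ∫ ω, V i ω ∂P :=
        div_mul_cancel₀ _ (hp_pos (i+1)).ne'
      have hnn : 0 ≤ u i * (∫ ω, V i ω ∂P) / p (i+1) :=
        div_nonneg (mul_nonneg (hunn i) (hvInt_nn i)) (hp_pos (i+1)).le
      nlinarith [hp_K (i+1), hp_pos (i+1)]
    calc ∑ i ∈ Finset.range N, u i * ∫ ω, V i ω ∂P
        ≤ K * ∑ i ∈ Finset.range N, (u i * ∫ ω, V i ω ∂P) / p (i+1) := h3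
      _ ≤ K * ((∫ ω, X 0 ω ∂P) + ∑' i, cInt i) :=
          mul_le_mul_of_nonneg_left h2 hKpos.le
  -- the tail sums of C
  set Te : ℕ → Ω → ℝ≥0∞ := fun n ω => ∑' i, ENNReal.ofReal (Cp (n+i) ω / p (n+i+1))
    with hTe_def
  set T : ℕ → Ω → ℝ := fun n ω => (Te n ω).toReal with hT_def
  have hCp_meas : ∀ i, Measurable (Cp i) := fun i =>
    (((hCadp i).mono (ℱ.le i) le_rfl)).max measurable_const
  have hTe_meas : ∀ n, Measurable (Te n) := fun n =>
    Measurable.ennreal_tsum (fun i => (((hCp_meas (n+i)).div_const _)).ennreal_ofReal)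
  have hT_meas : ∀ n, Measurable (T n) := fun n => (hTe_meas n).ennreal_toReal
  have hT_nn : ∀ n ω, 0 ≤ T n ω := fun n ω => ENNReal.toReal_nonneg
  have hccsum : ∀ n, Summable (fun i => cInt (n+i)) := fun n => by
    have := (summable_nat_add_iff n).mpr hCsum
    simpa [add_comm] using this
  have htail_nn : ∀ n, 0 ≤ ∑' i, cInt (n+i) := fun n =>
    tsum_nonneg (fun i => hcInt_nn _)
  have hTe_lint : ∀ n, ∫⁻ ω, Te n ω ∂P = ∑' i, ENNReal.ofReal (cInt (n+i) / p (n+i+1)) := by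
    intro n
    calc ∫⁻ ω, Te n ω ∂P
        = ∫⁻ ω, ∑' i, ENNReal.ofReal (Cp (n+i) ω / p (n+i+1)) ∂P := rfl
      _ = ∑' i, ∫⁻ ω, ENNReal.ofReal (Cp (n+i) ω / p (n+i+1)) ∂P :=
          lintegral_tsum (fun i => (((hCp_meas (n+i)).div_const _)).ennreal_ofReal.aemeasurable)
      _ = ∑' i, ENNReal.ofReal (cInt (n+i) / p (n+i+1)) := by
          refine tsum_congr fun i => ?_
          rw [← ofReal_integral_eq_lintegral_ofReal ((hCp_int (n+i)).div_const _)
            (Filter.Eventually.of_forall fun ω => div_nonneg (hCp_nn _ ω) (hp_pos _).le)]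
          rw [integral_div, hCpInt]
  have hTe_lint_le : ∀ n, ∫⁻ ω, Te n ω ∂P ≤ ENNReal.ofReal (∑' i, cInt (n+i)) := by
    intro n
    rw [hTe_lint n, ENNReal.ofReal_tsum_of_nonneg (fun i => hcInt_nn _) (hccsum n)]
    exact ENNReal.tsum_le_tsum (fun i => ENNReal.ofReal_le_ofReal
      (div_le_self (hcInt_nn _) (hp_one _)))
  have hTe_lt_top : ∀ n, ∫⁻ ω, Te n ω ∂P ≠ ∞ := fun n =>
    ne_top_of_le_ne_top ENNReal.ofReal_ne_top (hTe_lint_le n)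
  have hT_int : ∀ n, Integrable (T n) P := fun n =>
    integrable_toReal_of_lintegral_ne_top (hTe_meas n).aemeasurable (hTe_lt_top n)
  have hT_integral_le : ∀ n, ∫ ω, T n ω ∂P ≤ ∑' i, cInt (n+i) := by
    intro n
    rw [hT_def]
    rw [integral_toReal (hTe_meas n).aemeasurable (ae_lt_top (hTe_meas n) (hTe_lt_top n))]
    calc (∫⁻ ω, Te n ω ∂P).toReal
        ≤ (ENNReal.ofReal (∑' i, cInt (n+i))).toReal :=
          ENNReal.toReal_mono ENNReal.ofReal_ne_top (hTe_lint_le n)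
      _ = ∑' i, cInt (n+i) := ENNReal.toReal_ofReal (htail_nn n)
  have hT_rec : ∀ n, T n =ᵐ[P] fun ω => Cp n ω / p (n+1) + T (n+1) ω := by
    intro n
    filter_upwards [ae_lt_top (hTe_meas n) (hTe_lt_top n)] with ω hω
    have e1 : Te n ω = ENNReal.ofReal ((Cp n ω) / p (n+1)) + Te (n+1) ω := by
      show (∑' i, ENNReal.ofReal (Cp (n+i) ω / p (n+i+1)))
          = ENNReal.ofReal ((Cp n ω) / p (n+1)) + ∑' i, ENNReal.ofReal (Cp (n+1+i) ω / p (n+1+i+1))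
      rw [tsum_eq_zero_add' ENNReal.summable]
      congr 1
      refine tsum_congr fun i => ?_
      rw [show n + (i+1) = n+1+i from by omega]
    have h2 : Te (n+1) ω ≠ ∞ := by
      intro hcon
      rw [e1, hcon] at hω
      simp at hω
    show (Te n ω).toReal = Cp n ω / p (n+1) + (Te (n+1) ω).toReal
    rw [e1, ENNReal.toReal_add ENNReal.ofReal_ne_top h2,
      ENNReal.toReal_ofReal (div_nonneg (hCp_nn n ω) (hp_pos (n+1)).le)]
  -- the auxiliary nonnegative supermartingale
  set U : ℕ → Ω → ℝ := fun n ω => Xp n ω / p n + (P[T n|ℱ n]) ω with hU_def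
  have hU_adp : ∀ n, StronglyMeasurable[ℱ n] (U n) := fun n =>
    (((hXp_sm n).div_const' (p n)).add stronglyMeasurable_condExp)
  have hU_int : ∀ n, Integrable (U n) P := fun n =>
    ((hXp_int n).div_const _).add integrable_condExp
  have hcondT_nn : ∀ n, 0 ≤ᵐ[P] P[T n|ℱ n] := fun n =>
    condExp_nonneg (Filter.Eventually.of_forall (hT_nn n))
  have hU_nn : ∀ n, 0 ≤ᵐ[P] U n := fun n => by
    filter_upwards [hcondT_nn n] with ω hω
    exact add_nonneg (div_nonneg (hXp_nn n ω) (hp_pos n).le) hω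
  have hU_super : ∀ n, P[U (n+1)|ℱ n] ≤ᵐ[P] U n := by
    intro n
    have h1 : P[U (n+1)|ℱ n] =ᵐ[P]
        P[fun ω => Xp (n+1) ω / p (n+1)|ℱ n] + P[P[T (n+1)|ℱ (n+1)]|ℱ n] :=
      condExp_add ((hXp_int (n+1)).div_const _) integrable_condExp _
    have h2 : P[P[T (n+1)|ℱ (n+1)]|ℱ n] =ᵐ[P] P[T (n+1)|ℱ n] :=
      condExp_condExp_of_le (ℱ.mono (Nat.le_succ n)) (ℱ.le (n+1))
    have h3 : P[fun ω => Xp (n+1) ω / p (n+1)|ℱ n] =ᵐ[P]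
        fun ω => (P[X (n+1)|ℱ n]) ω / p (n+1) := by
      have e1 : (fun ω => Xp (n+1) ω / p (n+1)) =ᵐ[P]
          fun ω => (p (n+1))⁻¹ • X (n+1) ω := by
        filter_upwards [hXp_ae (n+1)] with ω hω
        rw [hω]; rw [smul_eq_mul, inv_mul_eq_div]
      calc P[fun ω => Xp (n+1) ω / p (n+1)|ℱ n]
          =ᵐ[P] P[(p (n+1))⁻¹ • X (n+1)|ℱ n] := condExp_congr_ae e1
        _ =ᵐ[P] (p (n+1))⁻¹ • P[X (n+1)|ℱ n] := condExp_smul _ _ _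
        _ =ᵐ[P] fun ω => (P[X (n+1)|ℱ n]) ω / p (n+1) := by
            filter_upwards with ω
            rw [Pi.smul_apply, smul_eq_mul, inv_mul_eq_div]
    have h6 : P[T n|ℱ n] =ᵐ[P] fun ω => Cp n ω / p (n+1) + (P[T (n+1)|ℱ n]) ω := by
      calc P[T n|ℱ n]
          =ᵐ[P] P[fun ω => Cp n ω / p (n+1) + T (n+1) ω|ℱ n] := condExp_congr_ae (hT_rec n)
        _ =ᵐ[P] P[fun ω => Cp n ω / p (n+1)|ℱ n] + P[T (n+1)|ℱ n] :=
            condExp_add ((hCp_int n).div_const _) (hT_int (n+1)) _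
        _ =ᵐ[P] fun ω => Cp n ω / p (n+1) + (P[T (n+1)|ℱ n]) ω := by
            rw [condExp_of_stronglyMeasurable (ℱ.le n)
              ((hCp_sm n).div_const' (p (n+1))) ((hCp_int n).div_const _)]
            filter_upwards with ω
            simp
    filter_upwards [h1, h2, h3, h6, hrec n, hXnn n, hVnn n, hcondT_nn (n+1)]
      with ω e1 e2 e3 e4 hr hx hv hctnn
    have hXeq : Xp n ω = X n ω := max_eq_left hx
    have hCle : C n ω ≤ Cp n ω := le_max_left _ _
    have hpp : 0 < p (n+1) := hp_pos (n+1)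
    have huv : 0 ≤ u n * V n ω := mul_nonneg (hunn n) hv
    have hb1 : (P[X (n+1)|ℱ n]) ω / p (n+1) ≤ ((1 + a n) * Xp n ω + Cp n ω) / p (n+1) := by
      apply div_le_div_of_nonneg_right ?_ hpp.le
      rw [hXeq]; linarith
    have hb2 : ((1 + a n) * Xp n ω + Cp n ω) / p (n+1)
        = Xp n ω / p n + Cp n ω / p (n+1) := by
      rw [hp_succ n]
      have h1an : (0:ℝ) < 1 + a n := by linarith [hann n]
      rw [div_add_div _ _ (hp_pos n).ne' (mul_pos (hp_pos n) h1an).ne']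
      rw [div_eq_div_iff (mul_pos (hp_pos n) h1an).ne' (mul_pos (hp_pos n) (mul_pos (hp_pos n) h1an)).ne']
      ring
    show (P[U (n+1)|ℱ n]) ω ≤ Xp n ω / p n + (P[T n|ℱ n]) ω
    simp only [Pi.add_apply] at e1
    rw [e1, e2, e3, e4]
    linarith [hb1, hb2]
  
  -- the nonnegative supermartingale f(U n)
  set gU : ℕ → Ω → ℝ := fun n ω => gf f (U n ω) with hgU_def
  have hgU_adp : Adapted ℱ gU := fun n =>
    (hf.gf_cont.comp_stronglyMeasurable (hU_adp n)).measurable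
  have hgU_int : ∀ n, Integrable (gU n) P := fun n => hf.integrable_gf (hU_int n)
  have hgU_super : Supermartingale gU ℱ P :=
    supermartingale_nat hgU_adp.stronglyAdapted hgU_int (fun n =>
      hf.cond_jensen (ℱ.le n) (hU_int (n+1)) (hU_int n) (hU_nn (n+1)) (hU_nn n) (hU_super n))
  have hgU_nonneg : ∀ n ω, 0 ≤ gU n ω := fun n ω => hf.gf_nonneg _
  have hgU_dec : ∀ n₀ n, n₀ ≤ n → ∫ ω, gU n ω ∂P ≤ ∫ ω, gU n₀ ω ∂P := by
    intro n₀ n h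
    have := hgU_super.setIntegral_le h MeasurableSet.univ
    simpa [setIntegral_univ] using this
  -- comparison of X with U
  have hXpU : ∀ n, ∀ᵐ ω ∂P, Xp n ω ≤ K * U n ω := by
    intro n
    filter_upwards [hcondT_nn n] with ω hω
    have hω' : (0:ℝ) ≤ (P[T n|ℱ n]) ω := hω
    have h2 : Xp n ω / K ≤ Xp n ω / p n :=
      div_le_div_of_nonneg_left (hXp_nn n ω) (hp_pos n) (hp_K n).le
    have h3 : K * (Xp n ω / K) = Xp n ω := by
      field_simp
    show Xp n ω ≤ K * (Xp n ω / p n + (P[T n|ℱ n]) ω)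
    calc Xp n ω = K * (Xp n ω / K) := h3.symm
      _ ≤ K * (Xp n ω / p n) := mul_le_mul_of_nonneg_left h2 hKpos.le
      _ ≤ K * (Xp n ω / p n + (P[T n|ℱ n]) ω) :=
          mul_le_mul_of_nonneg_left (by linarith [hω']) hKpos.le
  have hfX'U : ∀ n, ∀ᵐ ω ∂P, ψ K⁻¹ * f (X n ω) ≤ gU n ω := by
    intro n
    filter_upwards [hXpU n, hU_nn n, hXnn n] with ω h1 h2 h3
    have hXeq : X n ω = Xp n ω := (max_eq_left h3).symm
    have hKU : 0 ≤ K * U n ω := le_trans (hXp_nn n ω) h1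
    have hfm : f (Xp n ω) ≤ f (K * U n ω) :=
      hf.mono (Set.mem_Ici.mpr (hXp_nn n ω)) (Set.mem_Ici.mpr hKU) h1
    have hsm : f (K * U n ω) * ψ K⁻¹ ≤ f (K * U n ω * K⁻¹) :=
      hf.supermult _ hKU K⁻¹ ⟨(inv_pos.mpr hKpos).le, inv_le_one_of_one_le₀ hK1⟩
    have hKK : K * U n ω * K⁻¹ = U n ω := by
      field_simp
    have hgu : gU n ω = f (U n ω) := hf.gf_eq h2
    rw [hXeq, hgu]
    rw [hKK] at hsm
    nlinarith [hψpos, hfm]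
  have hfX_int : ∀ n, Integrable (fun ω => f (X n ω)) P := by
    intro n
    refine (hf.integrable_gf (hXint n)).congr ?_
    filter_upwards [hXnn n] with ω h using hf.gf_eq h
  have hfXgU : ∀ n, ψ K⁻¹ * ∫ ω, f (X n ω) ∂P ≤ ∫ ω, gU n ω ∂P := by
    intro n
    rw [← integral_const_mul]
    exact integral_mono_ae ((hfX_int n).const_mul _) (hgU_int n) (hfX'U n)
  -- the key lemma
  have key : ∀ δ, 0 < δ → ∃ n₀, n₀ ≤ θ (χ (κ δ)) (K * (L + M) / τ δ) ∧
      ∫ ω, gU n₀ ω ∂P < 2 * δ := by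
    intro δ hδ
    have hκ : 0 < κ δ := hf.kappa_pos δ hδ
    have hτδ : 0 < τ δ := hτpos δ hδ
    set k := χ (κ δ) with hk_def
    set b := K * (L + M) / τ δ with hb_def
    set N := θ k b with hN_def
    have hLM : 0 < L + M := by linarith
    have hb : 0 < b := div_pos (mul_pos hKpos hLM) hτδ
    have hKLM : K * ((∫ ω, X 0 ω ∂P) + ∑' i, cInt i) < K * (L + M) := by
      have : (∫ ω, X 0 ω ∂P) + ∑' i, cInt i < L + M := by
        have : (∑' i, cInt i) < M := hM
        linarith [hL]
      exact mul_lt_mul_of_pos_left this hKpos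
    have hex : ∃ n₀ ∈ Finset.Icc k N, ∫ ω, V n₀ ω ∂P < τ δ := by
      by_contra hcon
      push_neg at hcon
      have hsum_ge : τ δ * b ≤ ∑ i ∈ Finset.Icc k N, u i * ∫ ω, V i ω ∂P := by
        calc τ δ * b ≤ τ δ * ∑ i ∈ Finset.Icc k N, u i :=
              mul_le_mul_of_nonneg_left (hθ b hb k) hτδ.le
          _ = ∑ i ∈ Finset.Icc k N, τ δ * u i := Finset.mul_sum _ _ _
          _ ≤ ∑ i ∈ Finset.Icc k N, u i * ∫ ω, V i ω ∂P := by
              refine Finset.sum_le_sum fun i hi => ?_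
              have h1 := hcon i hi
              have h2 := hunn i
              nlinarith
      have hsub : ∑ i ∈ Finset.Icc k N, u i * ∫ ω, V i ω ∂P
          ≤ ∑ i ∈ Finset.range (N+1), u i * ∫ ω, V i ω ∂P := by
        refine Finset.sum_le_sum_of_subset_of_nonneg ?_
          (fun i _ _ => mul_nonneg (hunn i) (hvInt_nn i))
        intro i hi
        simp only [Finset.mem_Icc] at hi
        simp only [Finset.mem_range]
        omega
      have hτb : τ δ * b = K * (L + M) := by
        rw [hb_def]
        field_simp
      linarith [step3 (N+1)]
    obtain ⟨n₀, hn₀mem, hv⟩ := hex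
    have hk_le : k ≤ n₀ := (Finset.mem_Icc.mp hn₀mem).1
    have hn₀N : n₀ ≤ N := (Finset.mem_Icc.mp hn₀mem).2
    refine ⟨n₀, hn₀N, ?_⟩
    have hfXn₀ : ∫ ω, f (X n₀ ω) ∂P < δ := hτ δ hδ n₀ hv
    -- tail bound for T at n₀
    have htail : ∫ ω, T n₀ ω ∂P < κ δ := by
      have h1 : ∫ ω, T n₀ ω ∂P ≤ ∑' i, cInt (n₀+i) := hT_integral_le n₀
      obtain ⟨j, rfl⟩ := Nat.exists_eq_add_of_le hk_le
      have h2 : ∑' i, cInt (k+j+i) ≤ ∑' i, cInt (k+i) := by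
        have hsummable : Summable (fun i => cInt (k+i)) := hccsum k
        have e1 : (∑ i ∈ Finset.range j, cInt (k+i)) + ∑' i, cInt (k+(i+j)) = ∑' i, cInt (k+i) := by
          have := Summable.sum_add_tsum_nat_add (f := fun i => cInt (k+i)) j hsummable
          simpa using this
        have e2 : ∑' i, cInt (k+j+i) = ∑' i, cInt (k+(i+j)) := by
          refine tsum_congr fun i => ?_
          rw [show k+j+i = k+(i+j) from by omega]
        have e3 : 0 ≤ ∑ i ∈ Finset.range j, cInt (k+i) :=
          Finset.sum_nonneg fun i _ => hcInt_nn _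
        linarith
      have h3 : ∑' i, cInt (k+i) < κ δ := hχ (κ δ) hκ
      linarith
    -- bound for the conditional-expectation part
    set Y : Ω → ℝ := P[T n₀|ℱ n₀] with hY_def
    have hYnn : 0 ≤ᵐ[P] Y := hcondT_nn n₀
    have hYint : Integrable Y P := integrable_condExp
    have hYmean : ∫ ω, Y ω ∂P = ∫ ω, T n₀ ω ∂P := integral_condExp (ℱ.le n₀)
    set t : ℝ := max (∫ ω, T n₀ ω ∂P) (κ δ / 2) with ht_def
    have ht_pos : 0 < t := lt_max_of_lt_right (by linarith)
    have ht_lt : t < κ δ := max_lt htail (by linarith)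
    have hTt : ∫ ω, T n₀ ω ∂P ≤ t := le_max_left _ _
    have hft : f t < δ := hf.kappa_mod t ht_pos.le δ hδ ht_lt
    clear_value t
    have hgfY_int : Integrable (fun ω => gf f (Y ω)) P := hf.integrable_gf hYint
    have hgfY : ∫ ω, gf f (Y ω) ∂P ≤ f t := by
      have hb' : ∀ᵐ ω ∂P, gf f (Y ω) ≤ f t + rsl f t * (Y ω - t) := by
        filter_upwards [hYnn] with ω hω
        rw [hf.gf_eq hω]
        exact hf.tangent ht_pos hω
      have haff_int : Integrable (fun ω => f t + rsl f t * (Y ω - t)) P := by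
        have : Integrable (fun ω => rsl f t * Y ω + (f t - rsl f t * t)) P :=
          (hYint.const_mul _).add (integrable_const _)
        refine this.congr ?_
        filter_upwards with ω
        ring
      have h2 := integral_mono_ae hgfY_int haff_int hb'
      have hsub2 : Integrable (fun ω => Y ω - t) P := hYint.sub (integrable_const t)
      have h3 : ∫ ω, (f t + rsl f t * (Y ω - t)) ∂P
          = f t + rsl f t * ((∫ ω, Y ω ∂P) - t) := by
        rw [integral_add (integrable_const _) (hsub2.const_mul _),
          integral_const, integral_const_mul,
          integral_sub hYint (integrable_const t), integral_const]
        simp [measure_univ]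
      rw [h3] at h2
      have h4 : rsl f t * ((∫ ω, Y ω ∂P) - t) ≤ 0 := by
        have h5 : (∫ ω, Y ω ∂P) - t ≤ 0 := by rw [hYmean]; linarith
        exact mul_nonpos_of_nonneg_of_nonpos (hf.rsl_nonneg ht_pos) h5
      linarith
    -- subadditivity split
    have hZgf_int : Integrable (fun ω => gf f (Xp n₀ ω / p n₀)) P :=
      hf.integrable_gf ((hXp_int n₀).div_const _)
    have hsplit : ∀ᵐ ω ∂P, gU n₀ ω ≤ gf f (Xp n₀ ω / p n₀) + gf f (Y ω) := by
      filter_upwards [hYnn] with ω hω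
      have hz : 0 ≤ Xp n₀ ω / p n₀ := div_nonneg (hXp_nn n₀ ω) (hp_pos n₀).le
      have h1 : gU n₀ ω = f (Xp n₀ ω / p n₀ + Y ω) := hf.gf_eq (add_nonneg hz hω)
      rw [h1, hf.gf_eq hz, hf.gf_eq hω]
      exact hf.subadd hz hω
    have hZle : ∫ ω, gf f (Xp n₀ ω / p n₀) ∂P ≤ ∫ ω, f (X n₀ ω) ∂P := by
      refine integral_mono_ae hZgf_int (hfX_int n₀) ?_
      filter_upwards [hXnn n₀] with ω hω
      have hz : 0 ≤ Xp n₀ ω / p n₀ := div_nonneg (hXp_nn n₀ ω) (hp_pos n₀).le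
      rw [hf.gf_eq hz]
      have hle : Xp n₀ ω / p n₀ ≤ Xp n₀ ω := div_le_self (hXp_nn n₀ ω) (hp_one n₀)
      have hXeq : X n₀ ω = Xp n₀ ω := (max_eq_left hω).symm
      rw [hXeq]
      exact hf.mono (Set.mem_Ici.mpr hz) (Set.mem_Ici.mpr (hXp_nn n₀ ω)) hle
    calc ∫ ω, gU n₀ ω ∂P
        ≤ ∫ ω, (gf f (Xp n₀ ω / p n₀) + gf f (Y ω)) ∂P :=
          integral_mono_ae (hgU_int n₀) (hZgf_int.add hgfY_int) hsplit
      _ = (∫ ω, gf f (Xp n₀ ω / p n₀) ∂P) + ∫ ω, gf f (Y ω) ∂P :=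
          integral_add hZgf_int hgfY_int
      _ < 2 * δ := by linarith
  
  constructor
  · -- part (a)
    intro ε hε n hn
    have hδ : 0 < ε * ψ K⁻¹ / 2 := by positivity
    obtain ⟨n₀, hn₀, hEgU⟩ := key (ε * ψ K⁻¹ / 2) hδ
    have h1 := hfXgU n
    have h2 := hgU_dec n₀ n (le_trans hn₀ hn)
    have h3 : (∫ ω, f (X n ω) ∂P) * ψ K⁻¹ < ε * ψ K⁻¹ := by
      rw [mul_comm]
      linarith
    exact lt_of_mul_lt_mul_right h3 hψpos.le
  · -- part (b)
    intro lam hlam ε hε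
    have hfε : 0 < f ε := by
      have h0 : f 0 < f ε :=
        hf.strictMonoOn (Set.mem_Ici.mpr le_rfl) (Set.mem_Ici.mpr hε.le) hε
      rwa [hf.map_zero] at h0
    have hδ : 0 < lam * f ε * ψ K⁻¹ / 2 := by positivity
    obtain ⟨n₀, hn₀N, hEgU⟩ := key (lam * f ε * ψ K⁻¹ / 2) hδ
    set N := θ (χ (κ (lam * f ε * ψ K⁻¹ / 2)))
      (K * (L + M) / τ (lam * f ε * ψ K⁻¹ / 2)) with hN_def
    set c : ℝ := f ε * ψ K⁻¹ with hc_def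
    have hc_pos : 0 < c := mul_pos hfε hψpos
    have hEc : ∫ ω, gU n₀ ω ∂P < lam * c := by
      have e : 2 * (lam * f ε * ψ K⁻¹ / 2) = lam * c := by rw [hc_def]; ring
      linarith [hEgU]
    set B : ℕ → Set Ω := fun mm => {ω | ∃ j, j ∈ Set.Icc n₀ mm ∧ c ≤ gU j ω} with hB_def
    have hBmeas : ∀ mm, MeasurableSet (B mm) := by
      intro mm
      have e : B mm = ⋃ j ∈ Set.Icc n₀ mm, {ω | c ≤ gU j ω} := by
        ext ω; simp [hB_def]
      rw [e]
      refine MeasurableSet.biUnion (Set.to_countable _) fun j _ => ?_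
      exact measurableSet_le measurable_const ((hgU_adp j).mono (ℱ.le j) le_rfl)
    have hPB : ∀ mm, P (B mm) ≤ ENNReal.ofReal ((∫ ω, gU n₀ ω ∂P) / c) := by
      intro mm
      rcases lt_or_ge mm n₀ with hm | hm
      · have e : B mm = ∅ := by
          ext ω
          simp only [hB_def, Set.mem_setOf_eq, Set.mem_empty_iff_false, iff_false, not_exists]
          rintro j ⟨⟨hj1, hj2⟩, _⟩
          omega
        simp [e]
      · set σ : Ω → ℕ := hittingBtwn gU (Set.Ici c) n₀ mm with hσ_def
        have hσ : IsStoppingTime ℱ (fun ω => (σ ω : ℕ∞)) :=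
          hgU_adp.isStoppingTime_hittingBtwn measurableSet_Ici
        have hσ_le : ∀ ω, σ ω ≤ mm := fun ω => hittingBtwn_le ω
        have hσ_ge : ∀ ω, n₀ ≤ σ ω := fun ω => le_hittingBtwn hm ω
        have hsv_int : Integrable (stoppedValue gU (fun ω => (σ ω : ℕ∞))) P :=
          integrable_stoppedValue ℕ hσ hgU_int (N := mm) (fun ω => WithTop.coe_le_coe.mpr (hσ_le ω))
        have hopt : ∫ ω, stoppedValue gU (fun ω => (σ ω : ℕ∞)) ω ∂P ≤ ∫ ω, gU n₀ ω ∂P := by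
          have hneg := (hgU_super.neg).expected_stoppedValue_mono
            (isStoppingTime_const ℱ n₀) hσ (fun ω => WithTop.coe_le_coe.mpr (hσ_ge ω))
            (fun ω => WithTop.coe_le_coe.mpr (hσ_le ω))
          have e1 : stoppedValue (-gU) (fun _ => (WithTop.some n₀ : ℕ∞)) =
              -(stoppedValue gU (fun _ => (WithTop.some n₀ : ℕ∞))) := rfl
          have e2 : stoppedValue (-gU) (fun ω => (σ ω : ℕ∞)) =
              -(stoppedValue gU (fun ω => (σ ω : ℕ∞))) := rfl
          rw [e1, e2] at hneg
          simp only [Pi.neg_apply] at hneg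
          rw [integral_neg, integral_neg] at hneg
          have e3 : stoppedValue gU (fun _ => (WithTop.some n₀ : ℕ∞)) = gU n₀ := rfl
          rw [e3] at hneg
          exact neg_le_neg_iff.mp hneg
        have hlow : c * (P (B mm)).toReal ≤ ∫ ω, stoppedValue gU (fun ω => (σ ω : ℕ∞)) ω ∂P := by
          have hmem : ∀ ω ∈ B mm, c ≤ stoppedValue gU (fun ω => (σ ω : ℕ∞)) ω := by
            intro ω hω
            obtain ⟨j, hj, hcj⟩ := hω
            exact stoppedValue_hittingBtwn_mem ⟨j, hj, hcj⟩
          calc c * (P (B mm)).toReal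
              = ∫ _ in B mm, c ∂P := by rw [setIntegral_const, smul_eq_mul, mul_comm]; rfl
            _ ≤ ∫ ω in B mm, stoppedValue gU (fun ω => (σ ω : ℕ∞)) ω ∂P :=
                setIntegral_mono_on (integrableOn_const (measure_ne_top _ _))
                  hsv_int.integrableOn (hBmeas mm) hmem
            _ ≤ ∫ ω, stoppedValue gU (fun ω => (σ ω : ℕ∞)) ω ∂P :=
                setIntegral_le_integral hsv_int
                  (Filter.Eventually.of_forall fun ω => hgU_nonneg _ ω)
        have h7 : c * (P (B mm)).toReal ≤ ∫ ω, gU n₀ ω ∂P := le_trans hlow hopt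
        clear_value σ
        have htoReal : (P (B mm)).toReal ≤ (∫ ω, gU n₀ ω ∂P) / c := by
          rw [le_div_iff₀ hc_pos]
          linarith [h7]
        have hfin : P (B mm) ≠ ∞ := measure_ne_top _ _
        rw [← ENNReal.ofReal_toReal hfin]
        exact ENNReal.ofReal_le_ofReal htoReal
    have haeall : ∀ᵐ ω ∂P, ∀ n : ℕ, 0 ≤ X n ω ∧ Xp n ω ≤ K * U n ω ∧ 0 ≤ U n ω :=
      ae_all_iff.mpr fun n => by
        filter_upwards [hXnn n, hXpU n, hU_nn n] with ω h1 h2 h3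
        exact ⟨h1, h2, h3⟩
    have hincl : P {ω | ∃ n, N ≤ n ∧ ε ≤ X n ω} ≤ P (⋃ mm, B mm) := by
      refine measure_mono_ae ?_
      filter_upwards [haeall] with ω hω
      intro hmem
      obtain ⟨n, hnN, hXε⟩ := hmem
      refine Set.mem_iUnion.mpr ⟨n, n, ⟨le_trans hn₀N hnN, le_rfl⟩, ?_⟩
      obtain ⟨h1, h2, h3⟩ := hω n
      have hXeq : Xp n ω = X n ω := max_eq_left h1
      have hεU : ε ≤ K * U n ω := le_trans (by rw [hXeq]; exact hXε) h2
      have hKU : 0 ≤ K * U n ω := le_trans hε.le hεU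
      have hfm : f ε ≤ f (K * U n ω) :=
        hf.mono (Set.mem_Ici.mpr hε.le) (Set.mem_Ici.mpr hKU) hεU
      have hsm : f (K * U n ω) * ψ K⁻¹ ≤ f (K * U n ω * K⁻¹) :=
        hf.supermult _ hKU K⁻¹ ⟨(inv_pos.mpr hKpos).le, inv_le_one_of_one_le₀ hK1⟩
      have hKK : K * U n ω * K⁻¹ = U n ω := by field_simp
      show c ≤ gU n ω
      have hgu : gU n ω = f (U n ω) := hf.gf_eq h3
      rw [hgu]
      rw [hKK] at hsm
      calc c = f ε * ψ K⁻¹ := rfl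
        _ ≤ f (K * U n ω) * ψ K⁻¹ := mul_le_mul_of_nonneg_right hfm hψpos.le
        _ ≤ f (U n ω) := hsm
    have hmono_B : Monotone B := by
      intro i j hij ω hω
      obtain ⟨j', hj', hc'⟩ := hω
      exact ⟨j', ⟨hj'.1, hj'.2.trans hij⟩, hc'⟩
    have hPA : P (⋃ mm, B mm) ≤ ENNReal.ofReal ((∫ ω, gU n₀ ω ∂P) / c) := by
      rw [Directed.measure_iUnion (hmono_B.directed_le)]
      exact iSup_le hPB
    have hfinal : (∫ ω, gU n₀ ω ∂P) / c < lam := by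
      rw [div_lt_iff₀ hc_pos]
      linarith [hEc]
    calc P {ω | ∃ n, N ≤ n ∧ ε ≤ X n ω}
        ≤ ENNReal.ofReal ((∫ ω, gU n₀ ω ∂P) / c) := le_trans hincl hPA
      _ < ENNReal.ofReal lam := (ENNReal.ofReal_lt_ofReal_iff hlam).mpr hfinal
end

section
/- In the setting of the abstract Robbins-Monro scheme in a separable Hilbert space H — x_{n+1} := x_n − a_n·y_n with z ∈ H, E[‖x_0 − z‖²] < L, F_n := σ(x_0, y_0, …, x_{n−1}, y_{n−1}), conditions (i) E[‖y_n‖² | F_n] ≤ c·‖x_n − z‖² + d_n a.s. with sup_n E[d_n] ≤ d, (ii) ⟨x_n − z, E[y_n | F_n]⟩ ≥ 0 a.s., and (iv) Σ_{n=k}^{θ(k,b)} a_n ≥ b for all k, b, and Σ_{n=0}^∞ a_n² < M with Σ_{n=χ(ε)}^∞ a_n² < ε for all ε > 0 — suppose the regularity condition (iii) is replaced by: for all ε > 0 and n ∈ ℕ, E[⟨x_n − z, E[y_n | F_n]⟩] < τ(ε) implies E[‖x_n − z‖] < ε, for some τ : (0,∞) → (0,∞). Then: (a) E[‖x_n − z‖]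 < ε for all n ≥ ρ(ε) := θ(χ((K₁ε)²/d), K₂/τ(K₁ε)), where K₁ := e^{−cM/2}/2 and K₂ := e^{cM}·(L + dM); and (b) P(∃ n ≥ ρ'(λ,ε), ‖x_n − z‖ ≥ ε) < λ for all λ, ε > 0, where ρ'(λ,ε) := ρ(λε). -/
open MeasureTheory Filter Topology
open scoped ENNReal RealInnerProductSpace

set_option linter.unusedVariables false
set_option linter.unusedSectionVars false

section RMaux1
variable {α : Type*} {m m0 : MeasurableSpace α} {μ : Measure α}
  {E : Type*} [NormedAddCommGroup E] [InnerProductSpace ℝ E] [CompleteSpace E]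

lemma rm_condexpL2_ae_eq_condexp (hm : m ≤ m0) [IsFiniteMeasure μ]
    {f : α → E} (hf : MemLp f 2 μ) :
    (condExpL2 E ℝ hm (hf.toLp f) : α → E) =ᵐ[μ] μ[f|m] := by
  refine ae_eq_condExp_of_forall_setIntegral_eq hm (hf.integrable one_le_two)
    (fun s hs hμs => integrableOn_Lp_of_measure_ne_top _ one_le_two hμs.ne)
    (fun s hs hμs => ?_) (aestronglyMeasurable_condExpL2 hm _)
  rw [integral_condExpL2_eq hm _ hs hμs.ne]
  exact setIntegral_congr_ae (hm s hs) (hf.coeFn_toLp.mono fun x hx _ => hx)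

lemma rm_memℒp_two_condexp (hm : m ≤ m0) [IsFiniteMeasure μ]
    {f : α → E} (hf : MemLp f 2 μ) : MemLp (μ[f|m]) 2 μ :=
  (Lp.memLp _).ae_eq (rm_condexpL2_ae_eq_condexp hm hf)

lemma rm_integrable_inner {f g : α → E} (hf : MemLp f 2 μ) (hg : MemLp g 2 μ) :
    Integrable (fun ω => ⟪f ω, g ω⟫) μ := by
  have h := L2.integrable_inner (𝕜 := ℝ) (hf.toLp f) (hg.toLp g)
  refine h.congr ?_
  filter_upwards [hf.coeFn_toLp, hg.coeFn_toLp] with ω h1 h2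
  rw [h1, h2]

/-- pull-out property of conditional expectation for inner products -/
lemma rm_condexp_inner (hm : m ≤ m0) [IsFiniteMeasure μ]
    {X Y : α → E} (hXm : StronglyMeasurable[m] X) (hX : MemLp X 2 μ) (hY : MemLp Y 2 μ) :
    μ[fun ω => ⟪X ω, Y ω⟫ | m] =ᵐ[μ] fun ω => ⟪X ω, (μ[Y|m]) ω⟫ := by
  have hcY2 : MemLp (μ[Y|m]) 2 μ := rm_memℒp_two_condexp hm hY
  refine (ae_eq_condExp_of_forall_setIntegral_eq hm (rm_integrable_inner hX hY)
    (fun s hs hμs => (rm_integrable_inner hX hcY2).integrableOn)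
    (fun s hs hμs => ?_)
    ((hXm.inner stronglyMeasurable_condExp).aestronglyMeasurable)).symm
  -- ∫_s ⟪X, μ[Y|m]⟫ = ∫_s ⟪X, Y⟫
  set W : α → E := s.indicator X with hW
  have hWm : StronglyMeasurable[m] W := hXm.indicator hs
  have hW2 : MemLp W 2 μ := hX.indicator (hm s hs)
  have key : ∀ (g : α → E) (hg : MemLp g 2 μ),
      ∫ ω in s, ⟪X ω, g ω⟫ ∂μ = ⟪hW2.toLp W, hg.toLp g⟫ := by
    intro g hg
    rw [L2.inner_def]
    rw [← integral_indicator (hm s hs)]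
    refine integral_congr_ae ?_
    filter_upwards [hW2.coeFn_toLp, hg.coeFn_toLp] with ω h1 h2
    rw [h1, h2, hW]
    by_cases hω : ω ∈ s
    · simp [Set.indicator_of_mem hω]
    · simp [Set.indicator_of_notMem hω]
  rw [key _ hcY2, key _ hY]
  -- now L² inner products
  have h1 : ⟪hW2.toLp W, hcY2.toLp (μ[Y|m])⟫ = ⟪hW2.toLp W, (condExpL2 E ℝ hm (hY.toLp Y) : α →₂[μ] E)⟫ := by
    congr 1
    apply Lp.ext
    exact (hcY2.coeFn_toLp).trans ((rm_condexpL2_ae_eq_condexp hm hY).symm)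
  rw [h1, real_inner_comm, inner_condExpL2_left_eq_right hm]
  haveI : Fact (m ≤ m0) := ⟨hm⟩
  have h2 : (condExpL2 E ℝ hm (hW2.toLp W) : α →₂[μ] E) = hW2.toLp W := by
    have hmem : hW2.toLp W ∈ lpMeas E ℝ m 2 μ :=
      mem_lpMeas_iff_aestronglyMeasurable.mpr (hWm.aestronglyMeasurable.congr hW2.coeFn_toLp.symm)
    exact congrArg _ (Submodule.orthogonalProjectionOnto_mem_subspace_eq_self (⟨hW2.toLp W, hmem⟩ : lpMeas E ℝ m 2 μ))
  rw [h2, real_inner_comm]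

end RMaux1

section RMaux2
variable {α : Type*} {m m0 : MeasurableSpace α} {μ : Measure α}

lemma sqrt_le_tangent {s q : ℝ} (hs : 0 ≤ s) (hq : 0 < q) :
    Real.sqrt s ≤ (2 * Real.sqrt q)⁻¹ * s + Real.sqrt q / 2 := by
  have h1 : 0 < Real.sqrt q := Real.sqrt_pos.mpr hq
  have h3 : Real.sqrt s ^ 2 = s := Real.sq_sqrt hs
  rw [← h3]
  set u := Real.sqrt s with hu; set v := Real.sqrt q with hvv
  have h5 : Real.sqrt (u^2) = u := Real.sqrt_sq (Real.sqrt_nonneg s)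
  have key : (2*v)⁻¹ * u^2 + v/2 - u = (u-v)^2 / (2*v) := by field_simp; ring
  have h4 : (0:ℝ) ≤ (u-v)^2 / (2*v) := by positivity
  rw [h5]
  linarith

lemma rm_condexp_sqrt (hm : m ≤ m0) [IsProbabilityMeasure μ] {g : α → ℝ}
    (hg : Integrable g μ) (hgnn : 0 ≤ᵐ[μ] g)
    (hsg : Integrable (fun ω => Real.sqrt (g ω)) μ) :
    μ[fun ω => Real.sqrt (g ω)|m] ≤ᵐ[μ] fun ω => Real.sqrt ((μ[g|m]) ω) := by
  have hcond : ∀ q : ℚ, 0 < (q:ℝ) →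
      μ[fun ω => Real.sqrt (g ω)|m] ≤ᵐ[μ]
        fun ω => (2 * Real.sqrt q)⁻¹ * (μ[g|m]) ω + Real.sqrt q / 2 := by
    intro q hq
    have haff : Integrable (fun ω => (2 * Real.sqrt q)⁻¹ * g ω + Real.sqrt q / 2) μ :=
      (hg.const_mul _).add (integrable_const _)
    have h1 : μ[fun ω => Real.sqrt (g ω)|m] ≤ᵐ[μ]
        μ[fun ω => (2 * Real.sqrt q)⁻¹ * g ω + Real.sqrt q / 2|m] := by
      refine condExp_mono hsg haff ?_
      filter_upwards [hgnn] with ω hω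
      exact sqrt_le_tangent hω hq
    refine h1.trans ?_
    have hcalc : μ[fun ω => (2 * Real.sqrt q)⁻¹ * g ω + Real.sqrt q / 2|m]
        =ᵐ[μ] fun ω => (2 * Real.sqrt q)⁻¹ * (μ[g|m]) ω + Real.sqrt q / 2 := by
      have hfun : (fun ω => (2 * Real.sqrt q)⁻¹ * g ω + Real.sqrt q / 2)
          = (fun x => (2 * Real.sqrt q)⁻¹ * g x) + fun _ => Real.sqrt q / 2 := rfl
      rw [hfun]
      have hadd := condExp_add (μ := μ) (m := m) (hg.const_mul ((2 * Real.sqrt q)⁻¹))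
        (integrable_const (Real.sqrt q / 2))
      have hs : μ[fun ω => (2 * Real.sqrt q)⁻¹ * g ω|m]
          =ᵐ[μ] fun ω => (2 * Real.sqrt q)⁻¹ * (μ[g|m]) ω := by
        exact condExp_smul (μ := μ) (m := m) ((2 * Real.sqrt q)⁻¹ : ℝ) g
      filter_upwards [hadd, hs] with ω h1 h2
      simp only [Pi.add_apply] at h1
      rw [h1, h2, condExp_const hm]
    exact hcalc.le
  have hnn : 0 ≤ᵐ[μ] μ[g|m] := condExp_nonneg hgnn
  have hall : ∀ᵐ ω ∂μ, ∀ q : ℚ, 0 < (q:ℝ) →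
      (μ[fun ω => Real.sqrt (g ω)|m]) ω ≤ (2 * Real.sqrt q)⁻¹ * (μ[g|m]) ω + Real.sqrt q / 2 := by
    rw [ae_all_iff]
    intro q
    by_cases hq : 0 < (q:ℝ)
    · filter_upwards [hcond q hq] with ω hω using fun _ => hω
    · filter_upwards with ω hω; exact absurd hω hq
  filter_upwards [hall, hnn] with ω hω ht
  set t := (μ[g|m]) ω with htdef
  have ht' : (0:ℝ) ≤ t := ht
  set Z := (μ[fun ω => Real.sqrt (g ω)|m]) ω
  refine le_of_forall_pos_le_add fun δ hδ => ?_
  obtain ⟨q, hq1, hq2⟩ := exists_rat_btwn (show t < t + δ^2 by nlinarith)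
  have hqpos : 0 < (q:ℝ) := lt_of_le_of_lt ht' hq1
  have h1 : Z ≤ (2 * Real.sqrt q)⁻¹ * t + Real.sqrt q / 2 := hω q hqpos
  have h2 : (2 * Real.sqrt q)⁻¹ * t + Real.sqrt q / 2 ≤ Real.sqrt q := by
    have hsq : 0 < Real.sqrt q := Real.sqrt_pos.mpr hqpos
    have hv : Real.sqrt q ^ 2 = (q:ℝ) := Real.sq_sqrt hqpos.le
    have hkey : (2 * Real.sqrt q)⁻¹ * (Real.sqrt q ^2) + Real.sqrt q / 2 = Real.sqrt q := by
      field_simp; linarith [hv]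
    have hmono : (2 * Real.sqrt q)⁻¹ * t ≤ (2 * Real.sqrt q)⁻¹ * (Real.sqrt q^2) := by
      apply mul_le_mul_of_nonneg_left _ (by positivity)
      rw [hv]; exact hq1.le
    linarith
  have h3 : Real.sqrt q ≤ Real.sqrt t + δ := by
    have hle : (q:ℝ) ≤ (Real.sqrt t + δ)^2 := by
      nlinarith [Real.sq_sqrt ht', Real.sqrt_nonneg t]
    calc Real.sqrt q ≤ Real.sqrt ((Real.sqrt t + δ)^2) := Real.sqrt_le_sqrt hle
      _ = Real.sqrt t + δ := Real.sqrt_sq (by positivity)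
  linarith

lemma rm_integral_sqrt [IsProbabilityMeasure μ] {C : α → ℝ}
    (hC : Integrable C μ) (hCnn : 0 ≤ᵐ[μ] C)
    (hsC : Integrable (fun ω => Real.sqrt (C ω)) μ) :
    ∫ ω, Real.sqrt (C ω) ∂μ ≤ Real.sqrt (∫ ω, C ω ∂μ) := by
  set A := ∫ ω, Real.sqrt (C ω) ∂μ with hA
  have hAnn : 0 ≤ A := integral_nonneg fun ω => Real.sqrt_nonneg _
  have hsub : Integrable (fun ω => C ω - 2*A*Real.sqrt (C ω)) μ := hC.sub (hsC.const_mul (2*A))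
  have heq : (fun ω => (Real.sqrt (C ω) - A)^2)
      =ᵐ[μ] fun ω => (C ω - 2*A*Real.sqrt (C ω)) + A^2 := by
    filter_upwards [hCnn] with ω hω
    rw [sub_sq, Real.sq_sqrt hω]; ring
  have hint : Integrable (fun ω => (Real.sqrt (C ω) - A)^2) μ :=
    (hsub.add (integrable_const _)).congr heq.symm
  have h0 : 0 ≤ ∫ ω, (Real.sqrt (C ω) - A)^2 ∂μ := integral_nonneg fun ω => sq_nonneg _
  have hexp : ∫ ω, (Real.sqrt (C ω) - A)^2 ∂μ = ∫ ω, C ω ∂μ - A^2 := by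
    rw [integral_congr_ae heq, integral_add hsub (integrable_const _),
      integral_sub hC (hsC.const_mul (2*A)), integral_const, integral_const_mul]
    have : μ Set.univ = 1 := measure_univ
    rw [measureReal_def, this]
    simp [← hA]
    ring
  have hfin : A^2 ≤ ∫ ω, C ω ∂μ := by linarith [hexp ▸ h0]
  exact (Real.le_sqrt hAnn (integral_nonneg_of_ae hCnn)).mpr hfin

end RMaux2

section RMaux3
variable {α : Type*} {m0 : MeasurableSpace α} {μ : Measure α}

lemma rm_maximal [IsProbabilityMeasure μ] (𝒢 : ℕ → MeasurableSpace α)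
    (hmono : ∀ j k, j ≤ k → 𝒢 j ≤ 𝒢 k) (hle : ∀ k, 𝒢 k ≤ m0)
    (Z : ℕ → α → ℝ) (hZm : ∀ k, StronglyMeasurable[𝒢 k] (Z k))
    (hZint : ∀ k, Integrable (Z k) μ) (hZnn : ∀ k, 0 ≤ᵐ[μ] Z k)
    (n₀ N : ℕ) (hn₀N : n₀ ≤ N)
    (hsuper : ∀ k, n₀ ≤ k → k < N → μ[Z (k+1)|𝒢 k] ≤ᵐ[μ] Z k)
    (ε : ℝ) (hε : 0 < ε) :
    ε * (μ {ω | ∃ k, n₀ ≤ k ∧ k ≤ N ∧ ε ≤ Z k ω}).toReal ≤ ∫ ω, Z n₀ ω ∂μ := by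
  set B : ℕ → Set α := fun k =>
    {ω | ε ≤ Z k ω} ∩ ⋂ j ∈ Finset.Ico n₀ k, {ω | Z j ω < ε} with hB
  set G : ℕ → Set α := fun k => ⋂ j ∈ Finset.Icc n₀ k, {ω | Z j ω < ε} with hG
  have hBmeas : ∀ k, MeasurableSet[𝒢 k] (B k) := by
    intro k
    refine MeasurableSet.inter (measurableSet_le (measurable_const) (hZm k).measurable) ?_
    refine Finset.measurableSet_biInter _ fun j hj => ?_
    exact hmono j k (Finset.mem_Ico.mp hj).2.le _
      (measurableSet_lt (hZm j).measurable measurable_const)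
  have hGmeas : ∀ k, MeasurableSet[𝒢 k] (G k) := by
    intro k
    refine Finset.measurableSet_biInter _ fun j hj => ?_
    exact hmono j k (Finset.mem_Icc.mp hj).2 _
      (measurableSet_lt (hZm j).measurable measurable_const)
  have hBmeas0 : ∀ k, MeasurableSet (B k) := fun k => hle k _ (hBmeas k)
  have hGmeas0 : ∀ k, MeasurableSet (G k) := fun k => hle k _ (hGmeas k)
  -- decomposition of G k
  have hdecomp : ∀ k, n₀ ≤ k → G k = B (k+1) ∪ G (k+1) := by
    intro k hk
    ext ω
    simp only [hB, hG, Set.mem_iInter, Set.mem_union, Set.mem_inter_iff, Set.mem_setOf_eq,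
      Finset.mem_Icc, Finset.mem_Ico]
    constructor
    · intro h
      by_cases hZ : ε ≤ Z (k+1) ω
      · exact Or.inl ⟨hZ, fun j hj => h j ⟨hj.1, by omega⟩⟩
      · refine Or.inr fun j hj => ?_
        rcases Nat.lt_or_ge j (k+1) with h' | h'
        · exact h j ⟨hj.1, by omega⟩
        · have : j = k+1 := by omega
          rw [this]; exact lt_of_not_ge hZ
    · rintro (⟨h1, h2⟩ | h) j hj
      · exact h2 j ⟨hj.1, by omega⟩
      · exact h j ⟨hj.1, by omega⟩
  have hdisj : ∀ k, n₀ ≤ k → Disjoint (B k) (G k) := by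
    intro k hk
    rw [Set.disjoint_left]
    rintro ω ⟨h1, -⟩ h2
    simp only [hG, Set.mem_iInter, Set.mem_setOf_eq] at h2
    exact absurd (h2 k (Finset.mem_Icc.mpr ⟨hk, le_refl k⟩)) (not_lt.mpr h1)
  have hBdisj : ∀ j k, n₀ ≤ j → j < k → Disjoint (B j) (B k) := by
    intro j k hj hjk
    rw [Set.disjoint_left]
    rintro ω ⟨h1, -⟩ ⟨-, h2⟩
    simp only [Set.mem_iInter, Set.mem_setOf_eq] at h2
    exact absurd (h2 j (Finset.mem_Ico.mpr ⟨hj, hjk⟩)) (not_lt.mpr h1)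
  -- the main induction
  have hGnn : ∀ k, 0 ≤ ∫ ω in G k, Z k ω ∂μ := fun k =>
    integral_nonneg_of_ae (ae_restrict_of_ae (hZnn k))
  have claim : ∀ k, n₀ ≤ k → k ≤ N →
      (∑ j ∈ Finset.Icc n₀ k, ∫ ω in B j, Z j ω ∂μ) + ∫ ω in G k, Z k ω ∂μ
        ≤ ∫ ω, Z n₀ ω ∂μ := by
    intro k hk
    induction k with
    | zero =>
      intro _
      have hn0 : n₀ = 0 := Nat.le_zero.mp hk
      subst hn0
      have hcompl : G 0 = (B 0)ᶜ := by
        ext ω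
        simp [hB, hG, Finset.Icc_self, not_le]
      rw [Finset.Icc_self, Finset.sum_singleton, hcompl]
      rw [integral_add_compl (hBmeas0 0) (hZint 0)]
    | succ k ih =>
      intro hkN
      rcases Nat.lt_or_ge k n₀ with hlt | hge
      · -- then n₀ = k+1
        have hn0 : n₀ = k+1 := by omega
        subst hn0
        have hcompl : G (k+1) = (B (k+1))ᶜ := by
          ext ω
          simp only [hB, hG, Finset.Ico_self, Set.mem_iInter, Set.mem_compl_iff,
            Set.mem_inter_iff, Set.mem_setOf_eq, Finset.mem_Icc, Finset.notMem_empty,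
            false_implies, implies_true, and_true, not_le]
          constructor
          · intro h; exact h (k+1) ⟨le_rfl, le_rfl⟩
          · intro h i hi
            obtain rfl : i = k+1 := by omega
            exact h
        rw [Finset.Icc_self, Finset.sum_singleton, hcompl]
        rw [integral_add_compl (hBmeas0 (k+1)) (hZint (k+1))]
      · -- inductive step
        have ih' := ih hge (by omega)
        have hstep : ∫ ω in G k, Z (k+1) ω ∂μ ≤ ∫ ω in G k, Z k ω ∂μ := by
          rw [← setIntegral_condExp (hle k) (hZint (k+1)) (hGmeas k)]
          refine integral_mono_ae integrable_condExp.integrableOn (hZint k).integrableOn ?_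
          exact ae_restrict_of_ae (hsuper k hge (by omega))
        have hsplit : ∫ ω in G k, Z (k+1) ω ∂μ
            = (∫ ω in B (k+1), Z (k+1) ω ∂μ) + ∫ ω in G (k+1), Z (k+1) ω ∂μ := by
          rw [hdecomp k hge]
          exact setIntegral_union (hdisj (k+1) (by omega)) (hGmeas0 (k+1))
            (hZint (k+1)).integrableOn (hZint (k+1)).integrableOn
        rw [Finset.sum_Icc_succ_top (by omega : n₀ ≤ k+1)]
        linarith
  -- identify the target event
  have hTeq : {ω | ∃ k, n₀ ≤ k ∧ k ≤ N ∧ ε ≤ Z k ω} = ⋃ j ∈ Finset.Icc n₀ N, B j := by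
    ext ω
    simp only [Set.mem_setOf_eq, Set.mem_iUnion, Finset.mem_Icc, hB, Set.mem_inter_iff,
      Set.mem_iInter, Finset.mem_Ico]
    constructor
    · rintro ⟨k, hk1, hk2, hk3⟩
      have hex : ∃ j, n₀ ≤ j ∧ ε ≤ Z j ω := ⟨k, hk1, hk3⟩
      classical
      let j₀ := Nat.find hex
      obtain ⟨hj1, hj2⟩ := Nat.find_spec hex
      refine ⟨j₀, ⟨hj1, le_trans (Nat.find_min' hex ⟨hk1, hk3⟩) hk2⟩, hj2, fun i hi => ?_⟩
      by_contra hcon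
      exact Nat.find_min hex hi.2 ⟨hi.1, not_lt.mp hcon⟩
    · rintro ⟨j, ⟨hj1, hj2⟩, hj3, -⟩
      exact ⟨j, hj1, hj2, hj3⟩
  rw [hTeq]
  have hmeasure : μ (⋃ j ∈ Finset.Icc n₀ N, B j) = ∑ j ∈ Finset.Icc n₀ N, μ (B j) := by
    refine measure_biUnion_finset ?_ (fun j _ => hBmeas0 j)
    intro j hj k hk hjk
    rcases Nat.lt_or_ge j k with h | h
    · exact hBdisj j k (Finset.mem_Icc.mp hj).1 h
    · exact (hBdisj k j (Finset.mem_Icc.mp hk).1 (by omega)).symm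
  rw [hmeasure, ENNReal.toReal_sum (fun j _ => measure_ne_top μ _), Finset.mul_sum]
  have hterm : ∀ j ∈ Finset.Icc n₀ N, ε * (μ (B j)).toReal ≤ ∫ ω in B j, Z j ω ∂μ := by
    intro j _
    refine setIntegral_ge_of_const_le_real (hBmeas0 j) (measure_ne_top μ _) ?_ (hZint j).integrableOn
    rintro ω ⟨h1, -⟩
    exact h1
  calc ∑ j ∈ Finset.Icc n₀ N, ε * (μ (B j)).toReal
      ≤ ∑ j ∈ Finset.Icc n₀ N, ∫ ω in B j, Z j ω ∂μ := Finset.sum_le_sum hterm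
    _ ≤ ∫ ω, Z n₀ ω ∂μ := by linarith [claim N hn₀N (le_refl N), hGnn N]

end RMaux3

lemma sqrt_add_le' {a b : ℝ} (ha : 0 ≤ a) (hb : 0 ≤ b) :
    Real.sqrt (a+b) ≤ Real.sqrt a + Real.sqrt b := by
  have h1 : a + b ≤ (Real.sqrt a + Real.sqrt b)^2 := by
    nlinarith [Real.sq_sqrt ha, Real.sq_sqrt hb, Real.sqrt_nonneg a, Real.sqrt_nonneg b]
  calc Real.sqrt (a+b) ≤ Real.sqrt ((Real.sqrt a + Real.sqrt b)^2) := Real.sqrt_le_sqrt h1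
    _ = _ := Real.sqrt_sq (by positivity)

lemma sqrt_le_one_add_abs (t : ℝ) : Real.sqrt t ≤ 1 + |t| := by
  rcases le_or_gt t 1 with h | h
  · calc Real.sqrt t ≤ Real.sqrt 1 := Real.sqrt_le_sqrt h
      _ = 1 := Real.sqrt_one
      _ ≤ 1 + |t| := by linarith [abs_nonneg t]
  · have h2 : Real.sqrt t ≤ t := by
      nlinarith [Real.sq_sqrt (by linarith : (0:ℝ) ≤ t), Real.sqrt_nonneg t]
    calc Real.sqrt t ≤ t := h2
      _ ≤ 1 + |t| := by cases abs_cases t <;> linarith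

lemma integrable_sqrt_of_integrable {α : Type*} {m0 : MeasurableSpace α} {μ : Measure α}
    [IsFiniteMeasure μ] {f : α → ℝ} (hf : Integrable f μ) :
    Integrable (fun ω => Real.sqrt (f ω)) μ := by
  refine Integrable.mono' ((integrable_const (1:ℝ)).add hf.abs)
    (Real.continuous_sqrt.comp_aestronglyMeasurable hf.aestronglyMeasurable) ?_
  filter_upwards with ω
  rw [Real.norm_eq_abs, abs_of_nonneg (Real.sqrt_nonneg _)]
  exact sqrt_le_one_add_abs _

lemma rm_core {α : Type*} {m0 : MeasurableSpace α} {μ : Measure α} [IsProbabilityMeasure μ]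
    (𝒢 : ℕ → MeasurableSpace α) (hmono : ∀ j k, j ≤ k → 𝒢 j ≤ 𝒢 k) (hle : ∀ k, 𝒢 k ≤ m0)
    (V : ℕ → α → ℝ) (hVm : ∀ n, StronglyMeasurable[𝒢 n] (V n))
    (hVnn : ∀ n ω, 0 ≤ V n ω) (hVint : ∀ n, Integrable (V n) μ)
    (dseq : ℕ → α → ℝ) (hdnn : ∀ n, 0 ≤ᵐ[μ] dseq n) (hdint : ∀ n, Integrable (dseq n) μ)
    (a : ℕ → ℝ) (c : ℝ) (hc : 0 < c)
    (hcondV : ∀ n, μ[V (n+1)|𝒢 n] ≤ᵐ[μ]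
      fun ω => (1+c*(a n)^2) * V n ω + (a n)^2 * (μ[dseq n|𝒢 n]) ω)
    (n₀ N : ℕ) (hn₀N : n₀ ≤ N) :
    (∫ ω, Real.sqrt (V N ω) ∂μ ≤ Real.sqrt (∏ i ∈ Finset.Ico n₀ N, (1+c*(a i)^2)) *
      ((∫ ω, Real.sqrt (V n₀ ω) ∂μ) +
        Real.sqrt (∑ i ∈ Finset.Ico n₀ N, (a i)^2 * ∫ ω, dseq i ω ∂μ))) ∧
    (∀ ε : ℝ, 0 < ε →
      ε * (μ {ω | ∃ k, n₀ ≤ k ∧ k ≤ N ∧ ε ≤ Real.sqrt (V k ω)}).toReal ≤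
        Real.sqrt (∏ i ∈ Finset.Ico n₀ N, (1+c*(a i)^2)) *
      ((∫ ω, Real.sqrt (V n₀ ω) ∂μ) +
        Real.sqrt (∑ i ∈ Finset.Ico n₀ N, (a i)^2 * ∫ ω, dseq i ω ∂μ))) := by
  set D : ℕ → ℕ → α → ℝ := fun m n => μ[dseq n|𝒢 m] with hD
  set C : ℕ → α → ℝ := fun m ω => ∑ n ∈ Finset.Ico m N, (a n)^2 * D m n ω with hC
  set p : ℕ → ℝ := fun m => ∏ i ∈ Finset.Ico m N, (1+c*(a i)^2) with hp
  set R : ℕ → α → ℝ := fun m ω => p m * (V m ω + C m ω) with hR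
  set Z : ℕ → α → ℝ := fun m ω => Real.sqrt (R m ω) with hZ
  have hone_le : ∀ i, (1:ℝ) ≤ 1 + c*(a i)^2 := fun i => by nlinarith [sq_nonneg (a i)]
  have hpone : ∀ m, 1 ≤ p m := by
    intro m; simp only [hp]
    have := Finset.prod_le_prod (s := Finset.Ico m N) (f := fun _ => (1:ℝ))
      (g := fun i => 1 + c*(a i)^2) (fun i _ => zero_le_one) (fun i _ => hone_le i)
    simpa using this
  have hppos : ∀ m, 0 < p m := fun m => lt_of_lt_of_le one_pos (hpone m)
  have hDint : ∀ m n, Integrable (D m n) μ := by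
    intro m n; simp only [hD]; exact integrable_condExp
  have hDm : ∀ m n, StronglyMeasurable[𝒢 m] (D m n) := by
    intro m n; simp only [hD]; exact stronglyMeasurable_condExp
  have hDnn : ∀ m, ∀ᵐ ω ∂μ, ∀ n, 0 ≤ D m n ω := by
    intro m; simp only [hD]; exact ae_all_iff.mpr fun n => condExp_nonneg (hdnn n)
  have hCint : ∀ m, Integrable (C m) μ := by
    intro m; simp only [hC]
    exact integrable_finset_sum _ fun n _ => (hDint m n).const_mul _
  have hCm : ∀ m, StronglyMeasurable[𝒢 m] (C m) := by
    intro m; simp only [hC]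
    exact Finset.stronglyMeasurable_fun_sum _ fun n _ => (hDm m n).const_mul _
  have hCnn : ∀ m, ∀ᵐ ω ∂μ, 0 ≤ C m ω := by
    intro m
    simp only [hC]
    filter_upwards [hDnn m] with ω hω
    exact Finset.sum_nonneg fun n _ => mul_nonneg (sq_nonneg _) (hω n)
  have hRint : ∀ m, Integrable (R m) μ := by
    intro m; simp only [hR]
    exact ((hVint m).add (hCint m)).const_mul _
  have hRm : ∀ m, StronglyMeasurable[𝒢 m] (R m) := by
    intro m; simp only [hR]
    exact ((hVm m).add (hCm m)).const_mul _
  have hRnn : ∀ m, ∀ᵐ ω ∂μ, 0 ≤ R m ω := by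
    intro m
    simp only [hR]
    filter_upwards [hCnn m] with ω hω
    exact mul_nonneg (hppos m).le (by linarith [hVnn m ω])
  have hZint : ∀ m, Integrable (Z m) μ := by
    intro m; simp only [hZ]
    exact integrable_sqrt_of_integrable (hRint m)
  have hZm : ∀ m, StronglyMeasurable[𝒢 m] (Z m) := by
    intro m; simp only [hZ]
    exact Real.continuous_sqrt.comp_stronglyMeasurable (hRm m)
  have hZnn : ∀ m, 0 ≤ᵐ[μ] Z m := fun m => Filter.Eventually.of_forall fun ω => Real.sqrt_nonneg _
  -- supermartingale property of R
  have hsuperR : ∀ m, m < N → μ[R (m+1)|𝒢 m] ≤ᵐ[μ] R m := by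
    intro m hmN
    have hpsucc : p m = (1 + c*(a m)^2) * p (m+1) := by
      simp only [hp]; exact Finset.prod_eq_prod_Ico_succ_bot hmN _
    -- linearity of condexp on R (m+1)
    have hfun1 : R (m+1) = p (m+1) • (V (m+1) + C (m+1)) := by
      funext ω; simp only [hR, Pi.smul_apply, Pi.add_apply, smul_eq_mul]
    have e1 : μ[R (m+1)|𝒢 m] =ᵐ[μ] p (m+1) • μ[V (m+1) + C (m+1)|𝒢 m] := by
      rw [hfun1]; exact condExp_smul _ _ _
    have e2 : μ[V (m+1) + C (m+1)|𝒢 m] =ᵐ[μ] μ[V (m+1)|𝒢 m] + μ[C (m+1)|𝒢 m] :=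
      condExp_add (hVint (m+1)) (hCint (m+1)) _
    -- condexp of C (m+1)
    have hfun2 : C (m+1) = ∑ n ∈ Finset.Ico (m+1) N, (a n)^2 • D (m+1) n := by
      funext ω; simp only [hC, Finset.sum_apply, Pi.smul_apply, smul_eq_mul]
    have e3 : μ[C (m+1)|𝒢 m] =ᵐ[μ]
        ∑ n ∈ Finset.Ico (m+1) N, μ[(a n)^2 • D (m+1) n|𝒢 m] := by
      rw [hfun2]
      exact condExp_finsetSum (fun n _ => ((hDint (m+1) n).smul _)) _
    have e4 : ∀ n, μ[(a n)^2 • D (m+1) n|𝒢 m] =ᵐ[μ] (a n)^2 • D m n := by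
      intro n
      refine (condExp_smul _ _ _).trans ?_
      have : μ[D (m+1) n|𝒢 m] =ᵐ[μ] D m n := by
        simp only [hD]
        exact condExp_condExp_of_le (hmono m (m+1) (by omega)) (hle (m+1))
      filter_upwards [this] with ω hω
      simp [hω]
    have e4' : ∀ᵐ ω ∂μ, ∀ n, (μ[(a n)^2 • D (m+1) n|𝒢 m]) ω = (a n)^2 * D m n ω := by
      rw [ae_all_iff]
      intro n
      filter_upwards [e4 n] with ω hω
      simpa [smul_eq_mul] using hω
    -- combine
    filter_upwards [e1, e2, e3, e4', hcondV m, hCnn m, hDnn m] with ω h1 h2 h3 h4 h5 h6 h7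
    have hCm1 : (μ[C (m+1)|𝒢 m]) ω = ∑ n ∈ Finset.Ico (m+1) N, (a n)^2 * D m n ω := by
      rw [h3, Finset.sum_apply]
      exact Finset.sum_congr rfl fun n _ => h4 n
    have hCsplit : C m ω = (a m)^2 * D m m ω + ∑ n ∈ Finset.Ico (m+1) N, (a n)^2 * D m n ω := by
      simp only [hC]
      exact Finset.sum_eq_sum_Ico_succ_bot hmN _
    have hval : (μ[R (m+1)|𝒢 m]) ω
        = p (m+1) * ((μ[V (m+1)|𝒢 m]) ω + (μ[C (m+1)|𝒢 m]) ω) := by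
      rw [h1]; simp only [Pi.smul_apply, smul_eq_mul]; rw [h2]; simp
    rw [hval, hCm1]
    simp only [hR]
    have hp1 : 0 < p (m+1) := hppos (m+1)
    have hVge : 0 ≤ V m ω := hVnn m ω
    have hDge : 0 ≤ D m m ω := h7 m
    have hsum : (μ[V (m+1)|𝒢 m]) ω + ∑ n ∈ Finset.Ico (m+1) N, (a n)^2 * D m n ω
        ≤ (1 + c*(a m)^2) * V m ω + C m ω := by
      rw [hCsplit]
      have := h5
      linarith
    calc p (m+1) * ((μ[V (m+1)|𝒢 m]) ω + ∑ n ∈ Finset.Ico (m+1) N, (a n)^2 * D m n ω)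
        ≤ p (m+1) * ((1 + c*(a m)^2) * V m ω + C m ω) :=
          mul_le_mul_of_nonneg_left hsum hp1.le
      _ ≤ p (m+1) * ((1 + c*(a m)^2) * (V m ω + C m ω)) := by
          refine mul_le_mul_of_nonneg_left ?_ hp1.le
          nlinarith [mul_nonneg (mul_nonneg hc.le (sq_nonneg (a m))) h6]
      _ = p m * (V m ω + C m ω) := by rw [hpsucc]; ring
  -- supermartingale property of Z
  have hsuperZ : ∀ m, m < N → μ[Z (m+1)|𝒢 m] ≤ᵐ[μ] Z m := by
    intro m hmN
    have h1 : μ[Z (m+1)|𝒢 m] ≤ᵐ[μ] fun ω => Real.sqrt ((μ[R (m+1)|𝒢 m]) ω) := by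
      simp only [hZ]
      exact rm_condexp_sqrt (hle m) (hRint (m+1)) (hRnn (m+1)) (hZint (m+1))
    refine h1.trans ?_
    simp only [hZ]
    filter_upwards [hsuperR m hmN] with ω hω
    exact Real.sqrt_le_sqrt hω
  -- expectations decrease
  have hEZ : ∀ m, n₀ ≤ m → m ≤ N → ∫ ω, Z m ω ∂μ ≤ ∫ ω, Z n₀ ω ∂μ := by
    intro m hm
    induction m with
    | zero => intro _; have : n₀ = 0 := Nat.le_zero.mp hm; rw [this]
    | succ k ih =>
      intro hkN
      rcases Nat.lt_or_ge k n₀ with h | h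
      · have : n₀ = k+1 := by omega
        rw [this]
      · have step : ∫ ω, Z (k+1) ω ∂μ ≤ ∫ ω, Z k ω ∂μ := by
          rw [← integral_condExp (hle k) (f := Z (k+1))]
          exact integral_mono_ae integrable_condExp (hZint k) (hsuperZ k (by omega))
        exact le_trans step (ih h (by omega))
  -- bound on ∫ Z n₀
  have hZn₀ : ∫ ω, Z n₀ ω ∂μ ≤ Real.sqrt (p n₀) *
      ((∫ ω, Real.sqrt (V n₀ ω) ∂μ) +
        Real.sqrt (∑ i ∈ Finset.Ico n₀ N, (a i)^2 * ∫ ω, dseq i ω ∂μ)) := by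
    have hsV : Integrable (fun ω => Real.sqrt (V n₀ ω)) μ := integrable_sqrt_of_integrable (hVint n₀)
    have hsC : Integrable (fun ω => Real.sqrt (C n₀ ω)) μ := integrable_sqrt_of_integrable (hCint n₀)
    have step1 : ∫ ω, Z n₀ ω ∂μ ≤
        ∫ ω, Real.sqrt (p n₀) * (Real.sqrt (V n₀ ω) + Real.sqrt (C n₀ ω)) ∂μ := by
      refine integral_mono_ae (hZint n₀) (((hsV.add hsC)).const_mul _) ?_
      filter_upwards [hCnn n₀] with ω hω
      simp only [hZ, hR]
      rw [Real.sqrt_mul (hppos n₀).le]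
      exact mul_le_mul_of_nonneg_left (sqrt_add_le' (hVnn n₀ ω) hω) (Real.sqrt_nonneg _)
    have step2 : ∫ ω, Real.sqrt (p n₀) * (Real.sqrt (V n₀ ω) + Real.sqrt (C n₀ ω)) ∂μ
        = Real.sqrt (p n₀) * ((∫ ω, Real.sqrt (V n₀ ω) ∂μ) + ∫ ω, Real.sqrt (C n₀ ω) ∂μ) := by
      rw [integral_const_mul, integral_add hsV hsC]
    have step3 : ∫ ω, Real.sqrt (C n₀ ω) ∂μ ≤
        Real.sqrt (∑ i ∈ Finset.Ico n₀ N, (a i)^2 * ∫ ω, dseq i ω ∂μ) := by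
      refine le_trans (rm_integral_sqrt (hCint n₀) (hCnn n₀) hsC) ?_
      apply Real.sqrt_le_sqrt
      have : ∫ ω, C n₀ ω ∂μ = ∑ i ∈ Finset.Ico n₀ N, (a i)^2 * ∫ ω, dseq i ω ∂μ := by
        simp only [hC]
        rw [integral_finset_sum _ (fun n _ => (hDint n₀ n).const_mul _)]
        refine Finset.sum_congr rfl fun n _ => ?_
        rw [integral_const_mul]
        congr 1
        simp only [hD]
        exact integral_condExp (hle n₀)
      rw [this]
    rw [step2] at step1
    refine le_trans step1 ?_
    refine mul_le_mul_of_nonneg_left ?_ (Real.sqrt_nonneg _)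
    have : 0 ≤ ∫ ω, Real.sqrt (V n₀ ω) ∂μ := integral_nonneg fun ω => Real.sqrt_nonneg _
    linarith [step3]
  constructor
  · -- part (i)
    have hZNV : ∫ ω, Real.sqrt (V N ω) ∂μ = ∫ ω, Z N ω ∂μ := by
      refine integral_congr_ae (Filter.Eventually.of_forall fun ω => ?_)
      simp only [hZ, hR, hp, hC, Finset.Ico_self, Finset.prod_empty, Finset.sum_empty,
        one_mul, add_zero]
    rw [hZNV]
    exact le_trans (hEZ N hn₀N le_rfl) hZn₀
  · -- part (ii)
    intro ε hε
    have hmax := rm_maximal 𝒢 hmono hle Z hZm hZint hZnn n₀ N hn₀N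
      (fun k hk hkN => hsuperZ k hkN) ε hε
    have hincl : μ {ω | ∃ k, n₀ ≤ k ∧ k ≤ N ∧ ε ≤ Real.sqrt (V k ω)} ≤
        μ {ω | ∃ k, n₀ ≤ k ∧ k ≤ N ∧ ε ≤ Z k ω} := by
      refine measure_mono_ae ?_
      have hallC : ∀ᵐ ω ∂μ, ∀ k, 0 ≤ C k ω := ae_all_iff.mpr hCnn
      filter_upwards [hallC] with ω hω
      rintro ⟨k, h1, h2, h3⟩
      refine ⟨k, h1, h2, le_trans h3 ?_⟩
      apply Real.sqrt_le_sqrt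
      calc V k ω ≤ V k ω + C k ω := by linarith [hω k]
        _ ≤ p k * (V k ω + C k ω) := le_mul_of_one_le_left (by linarith [hVnn k ω, hω k]) (hpone k)
    calc ε * (μ {ω | ∃ k, n₀ ≤ k ∧ k ≤ N ∧ ε ≤ Real.sqrt (V k ω)}).toReal
        ≤ ε * (μ {ω | ∃ k, n₀ ≤ k ∧ k ≤ N ∧ ε ≤ Z k ω}).toReal := by
          refine mul_le_mul_of_nonneg_left ?_ hε.le
          exact ENNReal.toReal_mono (measure_ne_top μ _) hincl
      _ ≤ ∫ ω, Z n₀ ω ∂μ := hmax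
      _ ≤ _ := hZn₀

theorem robbins_monro_setup
    {Ω : Type*} {mΩ : MeasurableSpace Ω} {P : Measure Ω} [IsProbabilityMeasure P]
    {H : Type*} [NormedAddCommGroup H] [InnerProductSpace ℝ H] [CompleteSpace H]
    [TopologicalSpace.SeparableSpace H] [MeasurableSpace H] [BorelSpace H]
    (x y : ℕ → Ω → H) (a : ℕ → ℝ) (hann : ∀ n, 0 ≤ a n)
    (hx0meas : Measurable (x 0)) (hymeas : ∀ n, Measurable (y n))
    (hyint : ∀ n, Integrable (y n) P)
    (hrec : ∀ n : ℕ, ∀ ω, x (n+1) ω = x n ω - a n • y n ω)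
    (z : H)
    (hx2int : ∀ n, Integrable (fun ω => ‖x n ω - z‖^2) P)
    (hx1int : ∀ n, Integrable (fun ω => ‖x n ω - z‖) P)
    (ℱ : ℕ → MeasurableSpace Ω)
    (hℱ : ∀ n, ℱ n = MeasurableSpace.comap (x 0) inferInstance ⊔
        ⨆ i ∈ Finset.range n,
          (MeasurableSpace.comap (x i) inferInstance ⊔
            MeasurableSpace.comap (y i) inferInstance))
    (c d : ℝ) (hc : 0 < c) (hd : 0 < d)
    (dseq : ℕ → Ω → ℝ) (hdnn : ∀ n, 0 ≤ᵐ[P] dseq n) (hdint : ∀ n, Integrable (dseq n) P)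
    (hdsup : ∀ n, ∫ ω, dseq n ω ∂P ≤ d)
    (hy2int : ∀ n, Integrable (fun ω => ‖y n ω‖^2) P)
    (hi : ∀ n, ∀ᵐ ω ∂P, (P[fun ω' => ‖y n ω'‖^2 | ℱ n]) ω ≤ c * ‖x n ω - z‖^2 + dseq n ω)
    (hii : ∀ n, ∀ᵐ ω ∂P, 0 ≤ ⟪x n ω - z, (P[y n | ℱ n]) ω⟫) :
    (∀ j k, j ≤ k → ℱ j ≤ ℱ k) ∧ (∀ n, ℱ n ≤ mΩ) ∧
    (∀ n, StronglyMeasurable[ℱ n] (fun ω => ‖x n ω - z‖^2)) ∧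
    (∀ n, P[fun ω => ‖x (n+1) ω - z‖^2|ℱ n] ≤ᵐ[P]
      fun ω => (1+c*(a n)^2) * ‖x n ω - z‖^2 + (a n)^2 * (P[dseq n|ℱ n]) ω) ∧
    (∀ n, ∫ ω, ⟪x n ω - z, y n ω⟫ ∂P = ∫ ω, ⟪x n ω - z, (P[y n | ℱ n]) ω⟫ ∂P) ∧
    (∀ n, Integrable (fun ω => ⟪x n ω - z, y n ω⟫) P) ∧
    (∀ n ω, ‖x (n+1) ω - z‖^2 =
      ‖x n ω - z‖^2 + ((-(2*a n)) * ⟪x n ω - z, y n ω⟫ + (a n)^2 * ‖y n ω‖^2)) := by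
  haveI : SecondCountableTopology H := UniformSpace.secondCountable_of_separable H
  have hxmeas : ∀ n, Measurable (x n) := by
    intro n
    induction n with
    | zero => exact hx0meas
    | succ k ih =>
      have : x (k+1) = fun ω => x k ω - a k • y k ω := funext (hrec k)
      rw [this]
      exact ih.sub ((hymeas k).const_smul _)
  have hleF : ∀ n, ℱ n ≤ mΩ := by
    intro n
    rw [hℱ n]
    refine sup_le hx0meas.comap_le ?_
    exact iSup₂_le fun i _ => sup_le (hxmeas i).comap_le (hymeas i).comap_le
  have hmonoF : ∀ j k, j ≤ k → ℱ j ≤ ℱ k := by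
    intro j k hjk
    rw [hℱ j, hℱ k]
    refine sup_le_sup le_rfl ?_
    exact biSup_mono fun i hi => Finset.mem_range.mpr
      (lt_of_lt_of_le (Finset.mem_range.mp hi) hjk)
  have hxF : ∀ n, Measurable[ℱ n] (x n) := by
    intro n
    cases n with
    | zero =>
      rw [measurable_iff_comap_le, hℱ 0]
      exact le_sup_left
    | succ k =>
      have hxk : Measurable[ℱ (k+1)] (x k) := by
        rw [measurable_iff_comap_le, hℱ (k+1)]
        refine le_trans ?_ le_sup_right
        refine le_trans ?_ (le_iSup₂ (f := fun i _ => (MeasurableSpace.comap (x i) inferInstance ⊔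
            MeasurableSpace.comap (y i) inferInstance)) k (Finset.self_mem_range_succ k))
        exact le_sup_left
      have hyk : Measurable[ℱ (k+1)] (y k) := by
        rw [measurable_iff_comap_le, hℱ (k+1)]
        refine le_trans ?_ le_sup_right
        refine le_trans ?_ (le_iSup₂ (f := fun i _ => (MeasurableSpace.comap (x i) inferInstance ⊔
            MeasurableSpace.comap (y i) inferInstance)) k (Finset.self_mem_range_succ k))
        exact le_sup_right
      have : x (k+1) = fun ω => x k ω - a k • y k ω := funext (hrec k)
      rw [this]
      exact hxk.sub (hyk.const_smul _)
  have hXF : ∀ n, Measurable[ℱ n] (fun ω => x n ω - z) := by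
    intro n
    exact Measurable.sub (hxF n) (@measurable_const H Ω _ (ℱ n) z)
  have hVm : ∀ n, StronglyMeasurable[ℱ n] (fun ω => ‖x n ω - z‖^2) := by
    intro n
    have h2 : Measurable[ℱ n] (fun ω => ‖x n ω - z‖^2) :=
      (@Measurable.norm H Ω _ _ _ (ℱ n) _ (hXF n)).pow_const 2
    exact h2.stronglyMeasurable
  have hXsm : ∀ n, StronglyMeasurable[ℱ n] (fun ω => x n ω - z) :=
    fun n => (hXF n).stronglyMeasurable
  have hX2 : ∀ n, MemLp (fun ω => x n ω - z) 2 P := fun n =>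
    (memLp_two_iff_integrable_sq_norm (((hxmeas n).sub measurable_const).aestronglyMeasurable)).mpr
      (hx2int n)
  have hY2 : ∀ n, MemLp (y n) 2 P := fun n =>
    (memLp_two_iff_integrable_sq_norm ((hymeas n).aestronglyMeasurable)).mpr (hy2int n)
  have hpull : ∀ n, P[fun ω => ⟪x n ω - z, y n ω⟫|ℱ n]
      =ᵐ[P] fun ω => ⟪x n ω - z, (P[y n|ℱ n]) ω⟫ :=
    fun n => rm_condexp_inner (hleF n) (hXsm n) (hX2 n) (hY2 n)
  have hinner_int : ∀ n, Integrable (fun ω => ⟪x n ω - z, y n ω⟫) P :=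
    fun n => rm_integrable_inner (hX2 n) (hY2 n)
  have hteq : ∀ n, ∫ ω, ⟪x n ω - z, y n ω⟫ ∂P = ∫ ω, ⟪x n ω - z, (P[y n | ℱ n]) ω⟫ ∂P := by
    intro n
    rw [← integral_condExp (hleF n) (f := fun ω => ⟪x n ω - z, y n ω⟫)]
    exact integral_congr_ae (hpull n)
  have hVrec : ∀ n ω, ‖x (n+1) ω - z‖^2 =
      ‖x n ω - z‖^2 + ((-(2*a n)) * ⟪x n ω - z, y n ω⟫ + (a n)^2 * ‖y n ω‖^2) := by
    intro n ω
    rw [hrec n ω, sub_right_comm, norm_sub_sq_real, real_inner_smul_right, norm_smul]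
    simp only [Real.norm_eq_abs, mul_pow, sq_abs]
    ring
  have hcondV : ∀ n, P[fun ω => ‖x (n+1) ω - z‖^2|ℱ n] ≤ᵐ[P]
      fun ω => (1+c*(a n)^2) * ‖x n ω - z‖^2 + (a n)^2 * (P[dseq n|ℱ n]) ω := by
    intro n
    set F1 : Ω → ℝ := fun ω => ⟪x n ω - z, y n ω⟫ with hF1
    set F2 : Ω → ℝ := fun ω => ‖y n ω‖^2 with hF2
    have hsplit : (fun ω => ‖x (n+1) ω - z‖^2) = (fun ω => ‖x n ω - z‖^2) +
        ((-(2*a n)) • F1 + (a n)^2 • F2) := by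
      funext ω
      simp only [Pi.add_apply, Pi.smul_apply, smul_eq_mul, hF1, hF2]
      exact hVrec n ω
    have hint2 : Integrable ((-(2*a n)) • F1 + (a n)^2 • F2) P :=
      ((hinner_int n).smul _).add ((hy2int n).smul _)
    have e1 : P[fun ω => ‖x (n+1) ω - z‖^2|ℱ n] =ᵐ[P]
        P[fun ω => ‖x n ω - z‖^2|ℱ n] + P[(-(2*a n)) • F1 + (a n)^2 • F2|ℱ n] := by
      rw [hsplit]
      exact condExp_add (hx2int n) hint2 _
    have e2 : P[fun ω => ‖x n ω - z‖^2|ℱ n] = fun ω => ‖x n ω - z‖^2 :=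
      condExp_of_stronglyMeasurable (hleF n) (hVm n) (hx2int n)
    have e3 : P[(-(2*a n)) • F1 + (a n)^2 • F2|ℱ n] =ᵐ[P]
        (-(2*a n)) • P[F1|ℱ n] + (a n)^2 • P[F2|ℱ n] := by
      refine (condExp_add ((hinner_int n).smul _) ((hy2int n).smul _) _).trans ?_
      exact (condExp_smul _ _ _).add (condExp_smul _ _ _)
    have hF1nn : ∀ᵐ ω ∂P, 0 ≤ (P[F1|ℱ n]) ω := by
      filter_upwards [hpull n, hii n] with ω h1 h2
      rw [hF1, h1]
      exact h2
    have hF2le : P[F2|ℱ n] ≤ᵐ[P]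
        fun ω => c * ‖x n ω - z‖^2 + (P[dseq n|ℱ n]) ω := by
      have step : P[P[F2|ℱ n]|ℱ n] ≤ᵐ[P] P[fun ω => c * ‖x n ω - z‖^2 + dseq n ω|ℱ n] :=
        condExp_mono integrable_condExp (((hx2int n).const_mul c).add (hdint n)) (hi n)
      have lhs : P[P[F2|ℱ n]|ℱ n] =ᵐ[P] P[F2|ℱ n] :=
        condExp_condExp_of_le le_rfl (hleF n)
      have rhs : P[fun ω => c * ‖x n ω - z‖^2 + dseq n ω|ℱ n] =ᵐ[P]
          fun ω => c * ‖x n ω - z‖^2 + (P[dseq n|ℱ n]) ω := by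
        have hfun : (fun ω => c * ‖x n ω - z‖^2 + dseq n ω)
            = (c • fun ω => ‖x n ω - z‖^2) + dseq n := by
          funext ω; simp [smul_eq_mul]
        rw [hfun]
        refine (condExp_add ((hx2int n).smul c) (hdint n) _).trans ?_
        have h5 : P[c • fun ω => ‖x n ω - z‖^2|ℱ n] =ᵐ[P]
            c • P[fun ω => ‖x n ω - z‖^2|ℱ n] := condExp_smul _ _ _
        filter_upwards [h5] with ω h5
        simp only [Pi.add_apply, Pi.smul_apply, smul_eq_mul] at *
        rw [h5, e2]
      exact lhs.symm.trans_le (step.trans rhs.le)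
    filter_upwards [e1, e3, hF1nn, hF2le] with ω h1 h3 h4 h5
    simp only [Pi.add_apply] at h1
    rw [h1, e2]
    simp only [Pi.add_apply, Pi.smul_apply, smul_eq_mul] at h3 ⊢
    rw [h3]
    have ha2 : (0:ℝ) ≤ (a n)^2 := sq_nonneg _
    have hterm1 : -(2*a n) * (P[F1|ℱ n]) ω ≤ 0 := by
      have := mul_nonneg (hann n) h4
      nlinarith
    have hterm2 : (a n)^2 * (P[F2|ℱ n]) ω
        ≤ (a n)^2 * (c * ‖x n ω - z‖^2 + (P[dseq n|ℱ n]) ω) :=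
      mul_le_mul_of_nonneg_left h5 ha2
    nlinarith
  exact ⟨hmonoF, hleF, hVm, hcondV, hteq, hinner_int, hVrec⟩

set_option maxHeartbeats 2000000 in
/-- The quantitative Robbins-Monro theorem with the s.i.c.c. function `f` instantiated by the
square root: the regularity condition becomes
`E[⟨x_n − z, E[y_n|F_n]⟩] < τ(ε) → E[‖x_n − z‖] < ε`, and with `K₁ := e^{−cM/2}/2` and
`K₂ := e^{cM}(L + dM)`, `ρ(ε) := θ(χ((K₁ε)²/d), K₂/τ(K₁ε))` is a rate for `E[‖x_n − z‖] → 0`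
and `ρ'(λ,ε) := ρ(λε)` a rate of almost sure convergence for `x_n → z`. -/
theorem robbins_monro_quantitative_sqrt
    {Ω : Type*} {mΩ : MeasurableSpace Ω} {P : Measure Ω} [IsProbabilityMeasure P]
    {H : Type*} [NormedAddCommGroup H] [InnerProductSpace ℝ H] [CompleteSpace H]
    [TopologicalSpace.SeparableSpace H] [MeasurableSpace H] [BorelSpace H]
    (x y : ℕ → Ω → H) (a : ℕ → ℝ) (hann : ∀ n, 0 ≤ a n)
    (hx0meas : Measurable (x 0)) (hymeas : ∀ n, Measurable (y n))
    (hyint : ∀ n, Integrable (y n) P)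
    -- the Robbins-Monro iteration
    (hrec : ∀ n : ℕ, ∀ ω, x (n+1) ω = x n ω - a n • y n ω)
    (z : H) (L : ℝ) (hLpos : 0 < L)
    (hx2int : ∀ n, Integrable (fun ω => ‖x n ω - z‖^2) P)
    (hx1int : ∀ n, Integrable (fun ω => ‖x n ω - z‖) P)
    -- ‖x_0 − z‖² < L in mean
    (hL : ∫ ω, ‖x 0 ω - z‖^2 ∂P < L)
    -- F_n := σ(x_0, y_0, …, x_{n−1}, y_{n−1})
    (ℱ : ℕ → MeasurableSpace Ω)
    (hℱ : ∀ n, ℱ n = MeasurableSpace.comap (x 0) inferInstance ⊔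
        ⨆ i ∈ Finset.range n,
          (MeasurableSpace.comap (x i) inferInstance ⊔
            MeasurableSpace.comap (y i) inferInstance))
    (c d : ℝ) (hc : 0 < c) (hd : 0 < d)
    (dseq : ℕ → Ω → ℝ) (hdnn : ∀ n, 0 ≤ᵐ[P] dseq n) (hdint : ∀ n, Integrable (dseq n) P)
    (hdsup : ∀ n, ∫ ω, dseq n ω ∂P ≤ d)
    (hy2int : ∀ n, Integrable (fun ω => ‖y n ω‖^2) P)
    -- (i) E[‖y_n‖²|F_n] ≤ c‖x_n − z‖² + d_n a.s.
    (hi : ∀ n, ∀ᵐ ω ∂P, (P[fun ω' => ‖y n ω'‖^2 | ℱ n]) ω ≤ c * ‖x n ω - z‖^2 + dseq n ω)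
    -- (ii) ⟨x_n − z, E[y_n|F_n]⟩ ≥ 0 a.s.
    (hii : ∀ n, ∀ᵐ ω ∂P, 0 ≤ ⟪x n ω - z, (P[y n | ℱ n]) ω⟫)
    -- (iii') simplified regularity modulus τ
    (τ : ℝ → ℝ) (hτpos : ∀ ε > (0:ℝ), 0 < τ ε)
    (hiii : ∀ ε > (0:ℝ), ∀ n : ℕ,
        ∫ ω, ⟪x n ω - z, (P[y n | ℱ n]) ω⟫ ∂P < τ ε →
        ∫ ω, ‖x n ω - z‖ ∂P < ε)
    -- (iv) Σ a_n = ∞ with rate θ, Σ a_n² < M with rate χ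
    (θ : ℕ → ℝ → ℕ) (χ : ℝ → ℕ) (M : ℝ) (hMpos : 0 < M)
    (hθ : ∀ k : ℕ, ∀ b > (0:ℝ), b ≤ ∑ n ∈ Finset.Icc k (θ k b), a n)
    (hasum : Summable fun n => a n ^ 2) (haM : (∑' n, a n ^ 2) < M)
    (hχ : ∀ ε > (0:ℝ), ∑' i : ℕ, a (χ ε + i) ^ 2 < ε) :
    (∀ ε > (0:ℝ),
      ∀ n ≥ θ (χ ((Real.exp (-(c*M)/2) / 2 * ε)^2 / d))
          (Real.exp (c*M) * (L + d*M) / τ (Real.exp (-(c*M)/2) / 2 * ε)),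
        ∫ ω, ‖x n ω - z‖ ∂P < ε) ∧
    (∀ lam > (0:ℝ), ∀ ε > (0:ℝ),
      P {ω | ∃ n, θ (χ ((Real.exp (-(c*M)/2) / 2 * (lam * ε))^2 / d))
            (Real.exp (c*M) * (L + d*M) / τ (Real.exp (-(c*M)/2) / 2 * (lam * ε)))
          ≤ n ∧ ε ≤ ‖x n ω - z‖} < ENNReal.ofReal lam) := by
  obtain ⟨hmonoF, hleF, hVm, hcondV, hteq, hinner_int, hVrec⟩ :=
    robbins_monro_setup x y a hann hx0meas hymeas hyint hrec z hx2int hx1int ℱ hℱ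
      c d hc hd dseq hdnn hdint hdsup hy2int hi hii
  set K₁ : ℝ := Real.exp (-(c*M)/2) / 2 with hK₁
  set K₂ : ℝ := Real.exp (c*M) * (L + d*M) with hK₂
  have hK₁pos : 0 < K₁ := by rw [hK₁]; positivity
  have hK₂pos : 0 < K₂ := by rw [hK₂]; positivity
  have hen : ∀ n, (0:ℝ) ≤ ∫ ω, ‖x n ω - z‖^2 ∂P :=
    fun n => integral_nonneg fun ω => sq_nonneg _
  have htnn : ∀ n, (0:ℝ) ≤ ∫ ω, ⟪x n ω - z, (P[y n | ℱ n]) ω⟫ ∂P :=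
    fun n => integral_nonneg_of_ae (hii n)
  -- second moment of y
  have hy2le : ∀ n, ∫ ω, ‖y n ω‖^2 ∂P ≤ c * (∫ ω, ‖x n ω - z‖^2 ∂P) + d := by
    intro n
    rw [← integral_condExp (hleF n) (f := fun ω => ‖y n ω‖^2)]
    have h2 : ∫ ω, (P[fun ω' => ‖y n ω'‖^2|ℱ n]) ω ∂P ≤
        ∫ ω, (c * ‖x n ω - z‖^2 + dseq n ω) ∂P :=
      integral_mono_ae integrable_condExp (((hx2int n).const_mul c).add (hdint n)) (hi n)
    have h3 : ∫ ω, (c * ‖x n ω - z‖^2 + dseq n ω) ∂P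
        = c * (∫ ω, ‖x n ω - z‖^2 ∂P) + ∫ ω, dseq n ω ∂P := by
      rw [integral_add ((hx2int n).const_mul c) (hdint n), integral_const_mul]
    rw [h3] at h2
    linarith [hdsup n]
  -- expectation recursion
  have hee : ∀ n, ∫ ω, ‖x (n+1) ω - z‖^2 ∂P ≤
      ∫ ω, ‖x n ω - z‖^2 ∂P - 2*(a n)*(∫ ω, ⟪x n ω - z, (P[y n | ℱ n]) ω⟫ ∂P)
        + (a n)^2*(c * (∫ ω, ‖x n ω - z‖^2 ∂P) + d) := by
    intro n
    have h1 : ∫ ω, ‖x (n+1) ω - z‖^2 ∂P = ∫ ω, (‖x n ω - z‖^2 +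
        ((-(2*a n)) * ⟪x n ω - z, y n ω⟫ + (a n)^2 * ‖y n ω‖^2)) ∂P :=
      integral_congr_ae (Filter.Eventually.of_forall fun ω => hVrec n ω)
    have hInt1 : Integrable (fun ω => (-(2*a n)) * ⟪x n ω - z, y n ω⟫
        + (a n)^2 * ‖y n ω‖^2) P :=
      ((hinner_int n).const_mul _).add ((hy2int n).const_mul _)
    rw [h1, integral_add (hx2int n) hInt1,
      integral_add ((hinner_int n).const_mul _) ((hy2int n).const_mul _),
      integral_const_mul, integral_const_mul, hteq n]
    have h2 := mul_le_mul_of_nonneg_left (hy2le n) (sq_nonneg (a n))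
    linarith
  -- product bounds
  have hone_le : ∀ i, (1:ℝ) ≤ 1 + c*(a i)^2 := fun i => by nlinarith [sq_nonneg (a i)]
  have hpone : ∀ j N, (1:ℝ) ≤ ∏ i ∈ Finset.Ico j N, (1+c*(a i)^2) := by
    intro j N
    have := Finset.prod_le_prod (s := Finset.Ico j N) (f := fun _ => (1:ℝ))
      (g := fun i => 1 + c*(a i)^2) (fun i _ => zero_le_one) (fun i _ => hone_le i)
    simpa using this
  have hsumM : ∀ j N, ∑ i ∈ Finset.Ico j N, (a i)^2 ≤ ∑' i, a i ^ 2 := by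
    intro j N
    exact Summable.sum_le_tsum _ (fun i _ => sq_nonneg _) hasum
  have hprodle : ∀ j N, (∏ i ∈ Finset.Ico j N, (1+c*(a i)^2)) ≤ Real.exp (c*M) := by
    intro j N
    have h1 : (∏ i ∈ Finset.Ico j N, (1+c*(a i)^2)) ≤
        ∏ i ∈ Finset.Ico j N, Real.exp (c*(a i)^2) := by
      refine Finset.prod_le_prod (fun i _ => by positivity) (fun i _ => ?_)
      have := Real.add_one_le_exp (c*(a i)^2)
      linarith
    have h2 : ∏ i ∈ Finset.Ico j N, Real.exp (c*(a i)^2)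
        = Real.exp (∑ i ∈ Finset.Ico j N, c*(a i)^2) := (Real.exp_sum _ _).symm
    have h3 : ∑ i ∈ Finset.Ico j N, c*(a i)^2 ≤ c*M := by
      rw [← Finset.mul_sum]
      have := hsumM j N
      nlinarith [hsumM j N, haM, hc]
    calc (∏ i ∈ Finset.Ico j N, (1+c*(a i)^2)) ≤ _ := h1
      _ = _ := h2
      _ ≤ Real.exp (c*M) := Real.exp_le_exp.mpr h3
  have hsqrtexp : Real.sqrt (Real.exp (c*M)) = Real.exp ((c*M)/2) := by
    rw [show Real.exp (c*M) = (Real.exp ((c*M)/2))^2 by rw [sq, ← Real.exp_add]; ring_nf,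
      Real.sqrt_sq (Real.exp_pos _).le]
  have hsqrtp : ∀ j N, Real.sqrt (∏ i ∈ Finset.Ico j N, (1+c*(a i)^2))
      ≤ Real.exp ((c*M)/2) := by
    intro j N
    rw [← hsqrtexp]
    exact Real.sqrt_le_sqrt (hprodle j N)
  -- tail bounds
  have htailsummable : ∀ k, Summable (fun i => a (k+i)^2) := by
    intro k
    exact ((summable_nat_add_iff k).mpr hasum).congr (fun i => by rw [add_comm])
  have htail : ∀ k j N, k ≤ j → ∑ i ∈ Finset.Ico j N, (a i)^2 ≤ ∑' i, a (k+i)^2 := by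
    intro k j N hkj
    have h1 : ∑ i ∈ Finset.Ico j N, (a i)^2 ≤ ∑ i ∈ Finset.Ico k N, (a i)^2 := by
      refine Finset.sum_le_sum_of_subset_of_nonneg ?_ (fun i _ _ => sq_nonneg _)
      exact Finset.Ico_subset_Ico hkj le_rfl
    have h2 : ∑ i ∈ Finset.Ico k N, (a i)^2 = ∑ i ∈ Finset.range (N-k), (a (k+i))^2 := by
      rw [Finset.sum_Ico_eq_sum_range]
    rw [h2] at h1
    exact le_trans h1 (Summable.sum_le_tsum _ (fun i _ => sq_nonneg _) (htailsummable k))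
  -- the telescoping inequality
  have htel : ∀ N j k, j ≤ k → k ≤ N →
      (∏ i ∈ Finset.Ico k N, (1+c*(a i)^2)) *
        ((∫ ω, ‖x k ω - z‖^2 ∂P) + d * ∑ i ∈ Finset.Ico k N, (a i)^2)
      + ∑ i ∈ Finset.Ico j k, (2*(a i)*(∫ ω, ⟪x i ω - z, (P[y i | ℱ i]) ω⟫ ∂P))
      ≤ (∏ i ∈ Finset.Ico j N, (1+c*(a i)^2)) *
        ((∫ ω, ‖x j ω - z‖^2 ∂P) + d * ∑ i ∈ Finset.Ico j N, (a i)^2) := by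
    intro N j k hjk hkN
    induction k, hjk using Nat.le_induction with
    | base => simp
    | succ k hjk ih =>
      have hkN' : k < N := hkN
      have ih' := ih (by omega)
      rw [Finset.sum_Ico_succ_top hjk]
      have hstep : (∏ i ∈ Finset.Ico (k+1) N, (1+c*(a i)^2)) *
          ((∫ ω, ‖x (k+1) ω - z‖^2 ∂P) + d * ∑ i ∈ Finset.Ico (k+1) N, (a i)^2)
          + 2*(a k)*(∫ ω, ⟪x k ω - z, (P[y k | ℱ k]) ω⟫ ∂P)
          ≤ (∏ i ∈ Finset.Ico k N, (1+c*(a i)^2)) *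
          ((∫ ω, ‖x k ω - z‖^2 ∂P) + d * ∑ i ∈ Finset.Ico k N, (a i)^2) := by
        set e1 := ∫ ω, ‖x (k+1) ω - z‖^2 ∂P
        set e0 := ∫ ω, ‖x k ω - z‖^2 ∂P
        set tt := ∫ ω, ⟪x k ω - z, (P[y k | ℱ k]) ω⟫ ∂P
        set T1 := ∑ i ∈ Finset.Ico (k+1) N, (a i)^2 with hT1
        set p1 := ∏ i ∈ Finset.Ico (k+1) N, (1+c*(a i)^2) with hp1
        have hTsplit : ∑ i ∈ Finset.Ico k N, (a i)^2 = (a k)^2 + T1 :=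
          Finset.sum_eq_sum_Ico_succ_bot hkN' _
        have hPsplit : ∏ i ∈ Finset.Ico k N, (1+c*(a i)^2) = (1+c*(a k)^2) * p1 :=
          Finset.prod_eq_prod_Ico_succ_bot hkN' _
        rw [hTsplit, hPsplit]
        have hT1nn : 0 ≤ T1 := Finset.sum_nonneg fun i _ => sq_nonneg _
        have hp1one : 1 ≤ p1 := hpone (k+1) N
        have he0 : 0 ≤ e0 := hen k
        have htt : 0 ≤ tt := htnn k
        have hrec1 : e1 ≤ e0 - 2*(a k)*tt + (a k)^2*(c*e0 + d) := hee k
        set XX := (1+c*(a k)^2) * (e0 + d*((a k)^2 + T1)) with hXX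
        have h6 : (0:ℝ) ≤ c*(a k)^2*(d*T1) :=
          mul_nonneg (mul_nonneg hc.le (sq_nonneg _)) (mul_nonneg hd.le hT1nn)
        have h7 : (0:ℝ) ≤ c*(a k)^2*(d*(a k)^2) :=
          mul_nonneg (mul_nonneg hc.le (sq_nonneg _)) (mul_nonneg hd.le (sq_nonneg _))
        have hchain : e1 + d * T1 ≤ XX - 2*(a k)*tt := by
          rw [hXX]; nlinarith [hrec1, h6, h7]
        have h4 : p1 * (e1 + d*T1) ≤ p1 * XX - p1 * (2*(a k)*tt) := by
          have := mul_le_mul_of_nonneg_left hchain (by linarith : (0:ℝ) ≤ p1)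
          rw [mul_sub] at this
          exact this
        have h5 : 2*(a k)*tt ≤ p1 * (2*(a k)*tt) := by
          have hnn : (0:ℝ) ≤ 2*(a k)*tt :=
            mul_nonneg (mul_nonneg (by norm_num) (hann k)) htt
          nlinarith
        have hXXeq : p1 * XX = (1+c*(a k)^2) * p1 * (e0 + d*((a k)^2 + T1)) := by
          rw [hXX]; ring
        linarith
      linarith
  -- bound on the initial value
  have hA0 : ∀ N, (∏ i ∈ Finset.Ico 0 N, (1+c*(a i)^2)) *
      ((∫ ω, ‖x 0 ω - z‖^2 ∂P) + d * ∑ i ∈ Finset.Ico 0 N, (a i)^2) < K₂ := by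
    intro N
    have hsum_lt : ∑ i ∈ Finset.Ico 0 N, (a i)^2 < M := lt_of_le_of_lt (hsumM 0 N) haM
    have hdm : d * ∑ i ∈ Finset.Ico 0 N, (a i)^2 ≤ d * M :=
      mul_le_mul_of_nonneg_left hsum_lt.le hd.le
    have h1 : (∫ ω, ‖x 0 ω - z‖^2 ∂P) + d * ∑ i ∈ Finset.Ico 0 N, (a i)^2 < L + d*M := by
      linarith [hL]
    have h2 : (0:ℝ) ≤ (∫ ω, ‖x 0 ω - z‖^2 ∂P) + d * ∑ i ∈ Finset.Ico 0 N, (a i)^2 := by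
      have hs : 0 ≤ ∑ i ∈ Finset.Ico 0 N, (a i)^2 := Finset.sum_nonneg fun i _ => sq_nonneg _
      have := mul_nonneg hd.le hs
      linarith [hen 0]
    calc (∏ i ∈ Finset.Ico 0 N, (1+c*(a i)^2)) *
        ((∫ ω, ‖x 0 ω - z‖^2 ∂P) + d * ∑ i ∈ Finset.Ico 0 N, (a i)^2)
        ≤ Real.exp (c*M) * ((∫ ω, ‖x 0 ω - z‖^2 ∂P) + d * ∑ i ∈ Finset.Ico 0 N, (a i)^2) :=
          mul_le_mul_of_nonneg_right (hprodle 0 N) h2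
      _ < Real.exp (c*M) * (L + d*M) := by
          exact mul_lt_mul_of_pos_left h1 (Real.exp_pos _)
      _ = K₂ := by rw [hK₂]
  -- the key window argument
  have key : ∀ ε', 0 < ε' → ∃ n₀, χ ((K₁*ε')^2/d) ≤ n₀ ∧
      n₀ ≤ θ (χ ((K₁*ε')^2/d)) (K₂ / τ (K₁*ε')) ∧
      ∫ ω, ‖x n₀ ω - z‖ ∂P < K₁*ε' := by
    intro ε' hε'
    have hτ := hτpos (K₁*ε') (by positivity)
    have hbb : 0 < K₂ / τ (K₁*ε') := div_pos hK₂pos hτ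
    have hex : ∃ n₀ ∈ Finset.Icc (χ ((K₁*ε')^2/d)) (θ (χ ((K₁*ε')^2/d)) (K₂ / τ (K₁*ε'))),
        ∫ ω, ⟪x n₀ ω - z, (P[y n₀ | ℱ n₀]) ω⟫ ∂P < τ (K₁*ε') := by
      by_contra hcon
      push_neg at hcon
      set kk := χ ((K₁*ε')^2/d)
      set θk := θ kk (K₂ / τ (K₁*ε'))
      set N := θk + 1 with hN
      have h1 := htel N 0 N (Nat.zero_le N) le_rfl
      have hAN : (∏ i ∈ Finset.Ico N N, (1+c*(a i)^2)) *
          ((∫ ω, ‖x N ω - z‖^2 ∂P) + d * ∑ i ∈ Finset.Ico N N, (a i)^2)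
          = ∫ ω, ‖x N ω - z‖^2 ∂P := by simp
      rw [hAN] at h1
      have h2 : ∑ i ∈ Finset.Ico 0 N, (2*(a i)*(∫ ω, ⟪x i ω - z, (P[y i | ℱ i]) ω⟫ ∂P)) < K₂ := by
        have := hA0 N
        linarith [hen N]
      have h3 : ∑ i ∈ Finset.Icc kk θk, (2*(a i)*(∫ ω, ⟪x i ω - z, (P[y i | ℱ i]) ω⟫ ∂P)) ≤
          ∑ i ∈ Finset.Ico 0 N, (2*(a i)*(∫ ω, ⟪x i ω - z, (P[y i | ℱ i]) ω⟫ ∂P)) := by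
        refine Finset.sum_le_sum_of_subset_of_nonneg ?_
          (fun i _ _ => mul_nonneg (mul_nonneg (by norm_num) (hann i)) (htnn i))
        intro i hi
        simp only [Finset.mem_Icc] at hi
        simp only [Finset.mem_Ico]
        omega
      have h4 : 2 * τ (K₁*ε') * (K₂ / τ (K₁*ε')) ≤
          ∑ i ∈ Finset.Icc kk θk, (2*(a i)*(∫ ω, ⟪x i ω - z, (P[y i | ℱ i]) ω⟫ ∂P)) := by
        have h5 : 2 * τ (K₁*ε') * (K₂ / τ (K₁*ε')) ≤
            2 * τ (K₁*ε') * (∑ i ∈ Finset.Icc kk θk, a i) := by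
          refine mul_le_mul_of_nonneg_left (hθ kk _ hbb) (by positivity)
        refine le_trans h5 ?_
        rw [Finset.mul_sum]
        refine Finset.sum_le_sum fun i hi => ?_
        have := hcon i hi
        have := hann i
        nlinarith
      have h6 : 2 * τ (K₁*ε') * (K₂ / τ (K₁*ε')) = 2 * K₂ := by
        field_simp
      rw [h6] at h4
      linarith
    obtain ⟨n₀, hmem, ht0⟩ := hex
    rw [Finset.mem_Icc] at hmem
    exact ⟨n₀, hmem.1, hmem.2, hiii (K₁*ε') (by positivity) n₀ ht0⟩
  have hdInn : ∀ i, (0:ℝ) ≤ ∫ ω, dseq i ω ∂P := fun i => integral_nonneg_of_ae (hdnn i)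
  -- uniform final bound
  have final : ∀ ε', 0 < ε' → ∀ n₀, χ ((K₁*ε')^2/d) ≤ n₀ →
      (∫ ω, ‖x n₀ ω - z‖ ∂P < K₁*ε') →
      ∃ B : ℝ, B < ε' ∧ ∀ N, n₀ ≤ N →
        Real.sqrt (∏ i ∈ Finset.Ico n₀ N, (1+c*(a i)^2)) *
          ((∫ ω, Real.sqrt (‖x n₀ ω - z‖^2) ∂P) +
            Real.sqrt (∑ i ∈ Finset.Ico n₀ N, (a i)^2 * ∫ ω, dseq i ω ∂P)) ≤ B := by
    intro ε' hε' n₀ hχn₀ hn₀lt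
    set kk := χ ((K₁*ε')^2/d) with hkk
    set s1 := ∫ ω, ‖x n₀ ω - z‖ ∂P with hs1
    have hs1nn : 0 ≤ s1 := integral_nonneg fun ω => norm_nonneg _
    set tail := ∑' i, a (kk+i)^2 with htaildef
    have htailnn : 0 ≤ tail := tsum_nonneg fun i => sq_nonneg _
    refine ⟨Real.exp ((c*M)/2) * (s1 + Real.sqrt (d * tail)), ?_, ?_⟩
    · -- B < ε'
      have htail2 : tail < (K₁*ε')^2/d := hχ _ (by positivity)
      have hd2 : d * tail < (K₁*ε')^2 := by
        have := mul_lt_mul_of_pos_left htail2 hd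
        calc d * tail < d * ((K₁*ε')^2/d) := this
          _ = (K₁*ε')^2 := by field_simp
      have hsq2 : Real.sqrt (d * tail) < K₁*ε' := by
        have h1 : Real.sqrt (d * tail) < Real.sqrt ((K₁*ε')^2) :=
          Real.sqrt_lt_sqrt (mul_nonneg hd.le htailnn) hd2
        rwa [Real.sqrt_sq (by positivity)] at h1
      have hsum : s1 + Real.sqrt (d * tail) < K₁*ε' + K₁*ε' := by
        linarith [hn₀lt]
      have h0 : Real.exp ((c*M)/2) * Real.exp (-(c*M)/2) = 1 := by
        rw [← Real.exp_add, show (c*M)/2 + -(c*M)/2 = 0 by ring, Real.exp_zero]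
      have hfin : Real.exp ((c*M)/2) * (K₁*ε' + K₁*ε') = ε' := by
        rw [hK₁]
        linear_combination ε' * h0
      calc Real.exp ((c*M)/2) * (s1 + Real.sqrt (d * tail))
          < Real.exp ((c*M)/2) * (K₁*ε' + K₁*ε') :=
            mul_lt_mul_of_pos_left hsum (Real.exp_pos _)
        _ = ε' := hfin
    · -- each N ≥ n₀ is bounded by B
      intro N hN
      have hWeq : ∫ ω, Real.sqrt (‖x n₀ ω - z‖^2) ∂P = s1 := by
        rw [hs1]
        exact integral_congr_ae (Filter.Eventually.of_forall fun ω =>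
          Real.sqrt_sq (norm_nonneg _))
      rw [hWeq]
      have hsum1 : ∑ i ∈ Finset.Ico n₀ N, (a i)^2 * ∫ ω, dseq i ω ∂P
          ≤ d * tail := by
        calc ∑ i ∈ Finset.Ico n₀ N, (a i)^2 * ∫ ω, dseq i ω ∂P
            ≤ ∑ i ∈ Finset.Ico n₀ N, (a i)^2 * d :=
              Finset.sum_le_sum fun i _ => mul_le_mul_of_nonneg_left (hdsup i) (sq_nonneg _)
          _ = d * ∑ i ∈ Finset.Ico n₀ N, (a i)^2 := by rw [← Finset.sum_mul]; ring
          _ ≤ d * tail := mul_le_mul_of_nonneg_left (htail kk n₀ N hχn₀) hd.le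
      have hsq1 : Real.sqrt (∑ i ∈ Finset.Ico n₀ N, (a i)^2 * ∫ ω, dseq i ω ∂P)
          ≤ Real.sqrt (d * tail) := Real.sqrt_le_sqrt hsum1
      have hrhsnn : 0 ≤ s1 + Real.sqrt (∑ i ∈ Finset.Ico n₀ N, (a i)^2 * ∫ ω, dseq i ω ∂P) := by
        positivity
      calc Real.sqrt (∏ i ∈ Finset.Ico n₀ N, (1+c*(a i)^2)) *
            (s1 + Real.sqrt (∑ i ∈ Finset.Ico n₀ N, (a i)^2 * ∫ ω, dseq i ω ∂P))
          ≤ Real.exp ((c*M)/2) *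
            (s1 + Real.sqrt (∑ i ∈ Finset.Ico n₀ N, (a i)^2 * ∫ ω, dseq i ω ∂P)) :=
            mul_le_mul_of_nonneg_right (hsqrtp n₀ N) hrhsnn
        _ ≤ Real.exp ((c*M)/2) * (s1 + Real.sqrt (d * tail)) := by
            refine mul_le_mul_of_nonneg_left ?_ (Real.exp_pos _).le
            linarith
  constructor
  · -- part (a)
    intro ε hε n hn
    obtain ⟨n₀, hχn₀, hθn₀, hn₀lt⟩ := key ε hε
    have hn₀N : n₀ ≤ n := le_trans hθn₀ hn
    obtain ⟨B, hBlt, hBN⟩ := final ε hε n₀ hχn₀ hn₀lt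
    have hcore := (rm_core ℱ hmonoF hleF (fun m ω => ‖x m ω - z‖^2) hVm
      (fun m ω => sq_nonneg _) hx2int dseq hdnn hdint a c hc hcondV n₀ n hn₀N).1
    have hWeqN : ∫ ω, Real.sqrt (‖x n ω - z‖^2) ∂P = ∫ ω, ‖x n ω - z‖ ∂P :=
      integral_congr_ae (Filter.Eventually.of_forall fun ω => Real.sqrt_sq (norm_nonneg _))
    rw [hWeqN] at hcore
    exact lt_of_le_of_lt (le_trans hcore (hBN n hn₀N)) hBlt
  · -- part (b)
    intro lam hlam ε hε
    obtain ⟨n₀, hχn₀, hθn₀, hn₀lt⟩ := key (lam*ε) (by positivity)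
    obtain ⟨B, hBlt, hBN⟩ := final (lam*ε) (by positivity) n₀ hχn₀ hn₀lt
    set ρ := θ (χ ((K₁*(lam*ε))^2/d)) (K₂ / τ (K₁*(lam*ε))) with hρ
    have hTeq : {ω | ∃ n, ρ ≤ n ∧ ε ≤ ‖x n ω - z‖}
        = ⋃ N, {ω | ∃ k, ρ ≤ k ∧ k ≤ N ∧ ε ≤ ‖x k ω - z‖} := by
      ext ω
      simp only [Set.mem_setOf_eq, Set.mem_iUnion]
      constructor
      · rintro ⟨n, h1, h2⟩; exact ⟨n, n, h1, le_rfl, h2⟩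
      · rintro ⟨N, k, h1, h2, h3⟩; exact ⟨k, h1, h3⟩
    rw [hTeq]
    have hmonoT : Monotone (fun N => {ω | ∃ k, ρ ≤ k ∧ k ≤ N ∧ ε ≤ ‖x k ω - z‖}) := by
      intro N N' hNN' ω
      rintro ⟨k, h1, h2, h3⟩
      exact ⟨k, h1, le_trans h2 hNN', h3⟩
    rw [hmonoT.measure_iUnion]
    have hperN : ∀ N : ℕ, P {ω | ∃ k, ρ ≤ k ∧ k ≤ N ∧ ε ≤ ‖x k ω - z‖}
        ≤ ENNReal.ofReal (B / ε) := by
      intro N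
      set N' := max N n₀ with hN'
      have hn₀N' : n₀ ≤ N' := le_max_right _ _
      have hcore := (rm_core ℱ hmonoF hleF (fun m ω => ‖x m ω - z‖^2) hVm
        (fun m ω => sq_nonneg _) hx2int dseq hdnn hdint a c hc hcondV n₀ N' hn₀N').2 ε hε
      have hsub : {ω | ∃ k, ρ ≤ k ∧ k ≤ N ∧ ε ≤ ‖x k ω - z‖}
          ⊆ {ω | ∃ k, n₀ ≤ k ∧ k ≤ N' ∧ ε ≤ Real.sqrt (‖x k ω - z‖^2)} := by
        rintro ω ⟨k, h1, h2, h3⟩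
        refine ⟨k, le_trans hθn₀ h1, le_trans h2 (le_max_left _ _), ?_⟩
        rwa [Real.sqrt_sq (norm_nonneg _)]
      have hmono2 : P {ω | ∃ k, ρ ≤ k ∧ k ≤ N ∧ ε ≤ ‖x k ω - z‖} ≤ P {ω | ∃ k, n₀ ≤ k ∧ k ≤ N' ∧ ε ≤ Real.sqrt (‖x k ω - z‖^2)} := measure_mono hsub
      have h1 : ε * (P {ω | ∃ k, n₀ ≤ k ∧ k ≤ N' ∧ ε ≤ Real.sqrt (‖x k ω - z‖^2)}).toReal
          ≤ B := le_trans hcore (hBN N' hn₀N')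
      have h2 : (P {ω | ∃ k, n₀ ≤ k ∧ k ≤ N' ∧ ε ≤ Real.sqrt (‖x k ω - z‖^2)}).toReal
          ≤ B / ε := by
        rw [le_div_iff₀ hε]
        linarith
      calc P {ω | ∃ k, ρ ≤ k ∧ k ≤ N ∧ ε ≤ ‖x k ω - z‖}
          ≤ P {ω | ∃ k, n₀ ≤ k ∧ k ≤ N' ∧ ε ≤ Real.sqrt (‖x k ω - z‖^2)} := hmono2
        _ = ENNReal.ofReal ((P {ω | ∃ k, n₀ ≤ k ∧ k ≤ N' ∧
              ε ≤ Real.sqrt (‖x k ω - z‖^2)}).toReal) :=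
            (ENNReal.ofReal_toReal (measure_ne_top _ _)).symm
        _ ≤ ENNReal.ofReal (B / ε) := ENNReal.ofReal_le_ofReal h2
    refine lt_of_le_of_lt (iSup_le hperN) ?_
    rw [ENNReal.ofReal_lt_ofReal_iff hlam]
    rw [div_lt_iff₀ hε]
    linarith
end

section
/- Let H be a separable Hilbert space and M : H → Set(H) a β-strongly monotone set-valued operator, i.e. ⟨x − y, u − v⟩ ≥ β·‖x − y‖² whenever u ∈ M(x) and v ∈ M(y), where β > 0, and let z ∈ H with 0 ∈ M(z). Let c, d > 0, r ∈ ℕ with r ≥ 2c/β², set a_n := 1/(β·(n+r)), and consider the Robbins-Monro iteration x_{n+1} := x_n − a_n·y_n, where x_0 and (y_n) are H-valued random variables, F_n := σ(x_0, y_0, …, x_{n−1}, y_{n−1}), E[y_n | F_n] ∈ M(x_n) almost surely for all n, and E[‖y_n‖² | F_n] ≤ c·‖x_n − z‖² + d_n almost surely with nonnegative random variables (d_n) satisfying sup_n E[d_n] ≤ d. Let L > 0 satisfy E[‖x_0 − z‖²] ≤ L. Then for every u ≥ max{2d/β², r·L} and all n ∈ ℕ: E[‖x_n − z‖²] ≤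 u/(n+r). -/
open MeasureTheory Filter Topology
open scoped ENNReal RealInnerProductSpace

section Aux

variable {α H : Type*} [NormedAddCommGroup H] [InnerProductSpace ℝ H] [CompleteSpace H]
  {m m0 : MeasurableSpace α} {μ : Measure α}

theorem RM_integrable_inner {f g : α → H} (hf : MemLp f 2 μ) (hg : MemLp g 2 μ) :
    Integrable (fun ω => ⟪f ω, g ω⟫) μ := by
  have h := MeasureTheory.L2.integrable_inner (𝕜 := ℝ) (hf.toLp f) (hg.toLp g)
  refine h.congr ?_
  filter_upwards [hf.coeFn_toLp, hg.coeFn_toLp] with ω h1 h2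
  rw [h1, h2]

theorem RM_condExpL2_ae_eq [IsFiniteMeasure μ] (hm : m ≤ m0) {g : α → H} (hg : MemLp g 2 μ) :
    ((condExpL2 H ℝ hm (hg.toLp g) : α →₂[μ] H) : α → H) =ᵐ[μ] μ[g|m] := by
  haveI : IsFiniteMeasure (μ.trim hm) := isFiniteMeasure_trim hm
  refine ae_eq_condExp_of_forall_setIntegral_eq hm (hg.integrable one_le_two)
    (fun s _ _ => (integrable_condExpL2_of_isFiniteMeasure hm).integrableOn)
    (fun s hs hμs => ?_) (aestronglyMeasurable_condExpL2 hm _)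
  rw [integral_condExpL2_eq hm (hg.toLp g) hs hμs.ne]
  exact setIntegral_congr_ae (hm s hs) ((hg.coeFn_toLp).mono fun ω hω _ => hω)

theorem RM_condexp_memL2 [IsFiniteMeasure μ] (hm : m ≤ m0) {g : α → H} (hg : MemLp g 2 μ) :
    MemLp (μ[g|m]) 2 μ :=
  (Lp.memLp ((condExpL2 H ℝ hm (hg.toLp g) : α →₂[μ] H))).ae_eq (RM_condExpL2_ae_eq hm hg)

theorem RM_integral_inner_condexp [IsFiniteMeasure μ] (hm : m ≤ m0) {f g : α → H}
    (hf : MemLp f 2 μ) (hg : MemLp g 2 μ) (hfm : AEStronglyMeasurable[m] f μ) :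
    ∫ ω, ⟪f ω, g ω⟫ ∂μ = ∫ ω, ⟪f ω, (μ[g|m]) ω⟫ ∂μ := by
  haveI : Fact (m ≤ m0) := ⟨hm⟩
  set F : α →₂[μ] H := hf.toLp f with hF
  set G : α →₂[μ] H := hg.toLp g with hG
  have hFmem : F ∈ lpMeas H ℝ m 2 μ :=
    mem_lpMeas_iff_aestronglyMeasurable.mpr (hfm.congr (hf.coeFn_toLp).symm)
  have hproj : ((condExpL2 H ℝ hm F : α →₂[μ] H)) = F :=
    (Submodule.starProjection_eq_self_iff (K := lpMeas H ℝ m 2 μ)).mpr hFmem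
  have key : (inner ℝ F G : ℝ) = inner ℝ F ((condExpL2 H ℝ hm G : α →₂[μ] H)) := by
    conv_lhs => rw [← hproj]
    exact inner_condExpL2_left_eq_right hm
  calc ∫ ω, ⟪f ω, g ω⟫ ∂μ = ∫ ω, ⟪F ω, G ω⟫ ∂μ := by
        refine integral_congr_ae ?_
        filter_upwards [hf.coeFn_toLp, hg.coeFn_toLp] with ω h1 h2
        rw [h1, h2]
    _ = (inner ℝ F G : ℝ) := (MeasureTheory.L2.inner_def F G).symm
    _ = inner ℝ F ((condExpL2 H ℝ hm G : α →₂[μ] H)) := key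
    _ = ∫ ω, ⟪F ω, (condExpL2 H ℝ hm G : α →₂[μ] H) ω⟫ ∂μ :=
        MeasureTheory.L2.inner_def _ _
    _ = ∫ ω, ⟪f ω, (μ[g|m]) ω⟫ ∂μ := by
        refine integral_congr_ae ?_
        filter_upwards [hf.coeFn_toLp, RM_condExpL2_ae_eq hm hg] with ω h1 h2
        rw [h1, h2]

end Aux

theorem RM_arith {β t c d u E0 E1 : ℝ} (hβ2 : 0 < β^2) (ht1 : 1 ≤ t)
    (hE0 : 0 ≤ E0) (hE1 : 0 ≤ E1)
    (hstep : β^2*t^2*E1 ≤ (β^2*t^2 - 2*β^2*t + c)*E0 + d)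
    (hEt : E0*t ≤ u) (hcb : 2*c ≤ β^2*t) (hdb : 2*d ≤ β^2*u) (hu : 0 ≤ u) :
    E1*(t+1) ≤ u := by
  have htpos : (0:ℝ) < t := by linarith
  have hbt2 : (0:ℝ) < β^2*t^2 := by positivity
  rw [← mul_le_mul_iff_right₀ hbt2]
  have h1 : β^2*t^2*E1*(t+1) ≤ ((β^2*t^2 - 2*β^2*t + c)*E0 + d)*(t+1) :=
    mul_le_mul_of_nonneg_right hstep (by linarith)
  rcases le_or_gt (3/2 : ℝ) t with hT | hT
  · nlinarith [mul_le_mul_of_nonneg_right hcb (mul_nonneg hE0 (by linarith : (0:ℝ) ≤ t+1)),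
      mul_le_mul_of_nonneg_right hEt
        (mul_nonneg (mul_nonneg hβ2.le (by linarith : (0:ℝ) ≤ t - 3/2))
          (by linarith : (0:ℝ) ≤ t+1)),
      mul_le_mul_of_nonneg_right hdb (by linarith : (0:ℝ) ≤ t+1),
      mul_nonneg hβ2.le hu]
  · nlinarith [mul_le_mul_of_nonneg_right hcb (mul_nonneg hE0 (by linarith : (0:ℝ) ≤ t+1)),
      mul_le_mul_of_nonneg_right hdb (by linarith : (0:ℝ) ≤ t+1),
      mul_nonneg (mul_nonneg (mul_nonneg hβ2.le htpos.le) (by linarith : (0:ℝ) ≤ 3/2 - t))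
        (mul_nonneg hE0 (by linarith : (0:ℝ) ≤ t+1)),
      mul_nonneg hβ2.le hu, mul_nonneg (mul_nonneg hβ2.le hu) (by linarith : (0:ℝ) ≤ t-1)]


/-- `O(1/n)` rate in mean square for the Robbins-Monro scheme on a β-strongly monotone
set-valued operator: with `a_n := 1/(β(n+r))` and `r ≥ 2c/β²`,
`E[‖x_n − z‖²] ≤ u/(n+r)` for every `u ≥ max{2d/β², rL}`. -/
theorem robbins_monro_strongly_monotone_fast_rate
    {Ω : Type*} {mΩ : MeasurableSpace Ω} {P : Measure Ω} [IsProbabilityMeasure P]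
    {H : Type*} [NormedAddCommGroup H] [InnerProductSpace ℝ H] [CompleteSpace H]
    [TopologicalSpace.SeparableSpace H] [MeasurableSpace H] [BorelSpace H]
    (Mop : H → Set H) (β : ℝ) (hβ : 0 < β)
    -- β-strong monotonicity
    (hmono : ∀ x' y' u v : H, u ∈ Mop x' → v ∈ Mop y' →
        β * ‖x' - y'‖^2 ≤ ⟪x' - y', u - v⟫)
    (z : H) (hz : (0:H) ∈ Mop z)
    (c d : ℝ) (hc : 0 < c) (hd : 0 < d)
    (r : ℕ) (hr : 2*c/β^2 ≤ (r : ℝ))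
    (a : ℕ → ℝ) (ha : ∀ n : ℕ, a n = 1 / (β * ((n : ℝ) + (r : ℝ))))
    (x y : ℕ → Ω → H)
    (hx0meas : Measurable (x 0)) (hymeas : ∀ n, Measurable (y n))
    (hyint : ∀ n, Integrable (y n) P)
    (hy2int : ∀ n, Integrable (fun ω => ‖y n ω‖^2) P)
    (hx2int : ∀ n, Integrable (fun ω => ‖x n ω - z‖^2) P)
    -- the Robbins-Monro iteration
    (hrec : ∀ n : ℕ, ∀ ω, x (n+1) ω = x n ω - a n • y n ω)
    -- F_n := σ(x_0, y_0, …, x_{n−1}, y_{n−1})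
    (ℱ : ℕ → MeasurableSpace Ω)
    (hℱ : ∀ n, ℱ n = MeasurableSpace.comap (x 0) inferInstance ⊔
        ⨆ i ∈ Finset.range n,
          (MeasurableSpace.comap (x i) inferInstance ⊔
            MeasurableSpace.comap (y i) inferInstance))
    -- E[y_n|F_n] ∈ M(x_n) a.s.
    (hmem : ∀ n, ∀ᵐ ω ∂P, (P[y n | ℱ n]) ω ∈ Mop (x n ω))
    -- E[‖y_n‖²|F_n] ≤ c‖x_n − z‖² + d_n a.s. with sup_n E[d_n] ≤ d
    (dseq : ℕ → Ω → ℝ) (hdnn : ∀ n, 0 ≤ᵐ[P] dseq n) (hdint : ∀ n, Integrable (dseq n) P)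
    (hdsup : ∀ n, ∫ ω, dseq n ω ∂P ≤ d)
    (hbd : ∀ n, ∀ᵐ ω ∂P, (P[fun ω' => ‖y n ω'‖^2 | ℱ n]) ω ≤ c * ‖x n ω - z‖^2 + dseq n ω)
    (L : ℝ) (hLpos : 0 < L)
    -- E[‖x_0 − z‖²] ≤ L
    (hL : ∫ ω, ‖x 0 ω - z‖^2 ∂P ≤ L) :
    ∀ u : ℝ, max (2*d/β^2) ((r : ℝ) * L) ≤ u →
      ∀ n : ℕ, ∫ ω, ‖x n ω - z‖^2 ∂P ≤ u / ((n : ℝ) + (r : ℝ)) := by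
  intro u hu
  haveI : SecondCountableTopology H :=
    UniformSpace.secondCountable_of_separable H
  have hβ2 : (0:ℝ) < β^2 := by positivity
  have hrpos : (0:ℝ) < (r:ℝ) := lt_of_lt_of_le (by positivity) hr
  have hr1 : (1:ℝ) ≤ (r:ℝ) := by
    have : 1 ≤ r := Nat.one_le_iff_ne_zero.mpr (by
      rintro rfl; simp at hrpos)
    exact_mod_cast this
  have hu2 : 2*d/β^2 ≤ u := le_trans (le_max_left _ _) hu
  have hupos : 0 < u := lt_of_lt_of_le (by positivity) hu2
  -- measurability
  have hxmeas : ∀ n, Measurable (x n) := by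
    intro n
    induction n with
    | zero => exact hx0meas
    | succ n ih =>
      have hfn : x (n+1) = fun ω => x n ω - a n • y n ω := funext (hrec n)
      rw [hfn]
      exact ih.sub ((hymeas n).const_smul (a n))
  have hle : ∀ n, ℱ n ≤ mΩ := by
    intro n
    rw [hℱ n]
    exact sup_le hx0meas.comap_le
      (iSup₂_le fun i _ => sup_le (hxmeas i).comap_le (hymeas i).comap_le)
  have hFmono : ∀ n, ℱ n ≤ ℱ (n+1) := by
    intro n
    rw [hℱ n, hℱ (n+1)]
    refine sup_le_sup_left ?_ _
    exact biSup_mono fun i hi =>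
      Finset.mem_range.mpr (lt_of_lt_of_le (Finset.mem_range.mp hi) (Nat.le_succ n))
  have hx0F : ∀ n, Measurable[ℱ n] (x 0) := by
    intro n
    refine Measurable.of_comap_le ?_
    rw [hℱ n]
    exact le_sup_left
  have hadp : ∀ n, Measurable[ℱ n] (x n) := by
    intro n
    induction n with
    | zero => exact hx0F 0
    | succ n ih =>
      have hfn : x (n+1) = fun ω => x n ω - a n • y n ω := funext (hrec n)
      rw [hfn]
      have hyF : Measurable[ℱ (n+1)] (y n) := by
        refine Measurable.of_comap_le ?_
        rw [hℱ (n+1)]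
        refine le_sup_of_le_right ?_
        exact le_trans le_sup_right
          (le_iSup₂ (f := fun i (_ : i ∈ Finset.range (n+1)) =>
            MeasurableSpace.comap (x i) inferInstance ⊔
              MeasurableSpace.comap (y i) inferInstance) n (Finset.self_mem_range_succ n))
      exact (ih.mono (hFmono n) le_rfl).sub (hyF.const_smul (a n))
  -- L² membership
  have hx2 : ∀ n, MemLp (fun ω => x n ω - z) 2 P := fun n =>
    (memLp_two_iff_integrable_sq_norm
      (((hxmeas n).sub measurable_const).aestronglyMeasurable)).mpr (hx2int n)
  have hy2 : ∀ n, MemLp (y n) 2 P := fun n =>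
    (memLp_two_iff_integrable_sq_norm ((hymeas n).aestronglyMeasurable)).mpr (hy2int n)
  have henn : ∀ k, 0 ≤ ∫ ω, ‖x k ω - z‖^2 ∂P := fun k =>
    integral_nonneg fun ω => sq_nonneg _
  -- one-step inequality
  have hstep : ∀ k, ∫ ω, ‖x (k+1) ω - z‖^2 ∂P ≤
      (1 - 2*(a k)*β + (a k)^2*c) * (∫ ω, ‖x k ω - z‖^2 ∂P) + (a k)^2 * d := by
    intro k
    haveI : IsFiniteMeasure (P.trim (hle k)) := isFiniteMeasure_trim (hle k)
    have hak : 0 ≤ a k := by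
      rw [ha k]
      have : (0:ℝ) ≤ (k:ℝ) := Nat.cast_nonneg k
      positivity
    have hintI : Integrable (fun ω => ⟪x k ω - z, y k ω⟫) P :=
      RM_integrable_inner (hx2 k) (hy2 k)
    have hexp : ∫ ω, ‖x (k+1) ω - z‖^2 ∂P
        = (∫ ω, ‖x k ω - z‖^2 ∂P) - (2*(a k)) * (∫ ω, ⟪x k ω - z, y k ω⟫ ∂P)
          + (a k)^2 * (∫ ω, ‖y k ω‖^2 ∂P) := by
      have hptw : (fun ω => ‖x (k+1) ω - z‖^2) = fun ω =>
          (‖x k ω - z‖^2 - (2*(a k)) * ⟪x k ω - z, y k ω⟫) + (a k)^2 * ‖y k ω‖^2 := by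
        funext ω
        rw [hrec k ω, sub_right_comm, norm_sub_sq_real, real_inner_smul_right, norm_smul,
          mul_pow]
        simp only [Real.norm_eq_abs, sq_abs]
        ring
      have hA : Integrable (fun ω => ‖x k ω - z‖^2 - (2*(a k)) * ⟪x k ω - z, y k ω⟫) P :=
        (hx2int k).sub (hintI.const_mul _)
      have hB : Integrable (fun ω => (a k)^2 * ‖y k ω‖^2) P := (hy2int k).const_mul _
      rw [hptw, integral_add hA hB, integral_sub (hx2int k) (hintI.const_mul _),
        integral_const_mul _ _, integral_const_mul _ _]
    have hsm : AEStronglyMeasurable[ℱ k] (fun ω => x k ω - z) P :=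
      (((hadp k).sub measurable_const).stronglyMeasurable).aestronglyMeasurable
    have hI : β * (∫ ω, ‖x k ω - z‖^2 ∂P) ≤ ∫ ω, ⟪x k ω - z, y k ω⟫ ∂P := by
      rw [RM_integral_inner_condexp (hle k) (hx2 k) (hy2 k) hsm]
      have hc2 : MemLp (P[y k|ℱ k]) 2 P := RM_condexp_memL2 (hle k) (hy2 k)
      have hae : ∀ᵐ ω ∂P, β * ‖x k ω - z‖^2 ≤ ⟪x k ω - z, (P[y k|ℱ k]) ω⟫ := by
        filter_upwards [hmem k] with ω hω
        have h := hmono (x k ω) z ((P[y k|ℱ k]) ω) 0 hω hz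
        rwa [sub_zero] at h
      have hmple := integral_mono_ae ((hx2int k).const_mul β)
        (RM_integrable_inner (hx2 k) hc2) hae
      rwa [integral_const_mul _ _] at hmple
    have hJ : (∫ ω, ‖y k ω‖^2 ∂P) ≤ c * (∫ ω, ‖x k ω - z‖^2 ∂P) + d := by
      have h1 : ∫ ω, ‖y k ω‖^2 ∂P = ∫ ω, (P[fun ω' => ‖y k ω'‖^2|ℱ k]) ω ∂P :=
        (integral_condExp (hle k)).symm
      rw [h1]
      calc ∫ ω, (P[fun ω' => ‖y k ω'‖^2|ℱ k]) ω ∂P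
          ≤ ∫ ω, (c*‖x k ω - z‖^2 + dseq k ω) ∂P :=
            integral_mono_ae integrable_condExp (((hx2int k).const_mul c).add (hdint k)) (hbd k)
        _ = c*(∫ ω, ‖x k ω - z‖^2 ∂P) + ∫ ω, dseq k ω ∂P := by
            rw [integral_add ((hx2int k).const_mul c) (hdint k), integral_const_mul _ _]
        _ ≤ c*(∫ ω, ‖x k ω - z‖^2 ∂P) + d := by linarith [hdsup k]
    rw [hexp]
    nlinarith [mul_le_mul_of_nonneg_left hI (show (0:ℝ) ≤ 2 * a k by linarith),
      mul_le_mul_of_nonneg_left hJ (sq_nonneg (a k))]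
  -- main induction
  intro n
  induction n with
  | zero =>
    have hub : (r:ℝ) * L ≤ u := le_trans (le_max_right _ _) hu
    have : (((0:ℕ):ℝ) + (r:ℝ)) = (r:ℝ) := by push_cast; ring
    rw [this]
    rw [le_div_iff₀ hrpos]
    calc (∫ ω, ‖x 0 ω - z‖^2 ∂P) * r ≤ L * r := by
          have := henn 0
          nlinarith
      _ ≤ u := by linarith [hub]
  | succ n ih =>
    set t : ℝ := (n:ℝ) + (r:ℝ) with hT
    have htpos : 0 < t := by
      have : (0:ℝ) ≤ (n:ℝ) := Nat.cast_nonneg n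
      simp only [hT]; linarith
    have ht1 : (1:ℝ) ≤ t := by
      have : (0:ℝ) ≤ (n:ℝ) := Nat.cast_nonneg n
      simp only [hT]; linarith
    have hcast : (((n+1:ℕ)):ℝ) + (r:ℝ) = t + 1 := by push_cast; simp only [hT]; ring
    rw [hcast]
    have haa : a n = 1/(β*t) := ha n
    have hbtne : β * t ≠ 0 := by positivity
    have hstep' : β^2*t^2 * (∫ ω, ‖x (n+1) ω - z‖^2 ∂P) ≤
        (β^2*t^2 - 2*β^2*t + c) * (∫ ω, ‖x n ω - z‖^2 ∂P) + d := by
      have h := hstep n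
      rw [haa] at h
      have hb : (0:ℝ) < β^2*t^2 := by positivity
      calc β^2*t^2 * (∫ ω, ‖x (n+1) ω - z‖^2 ∂P)
          ≤ β^2*t^2 * ((1 - 2*(1/(β*t))*β + (1/(β*t))^2*c) * (∫ ω, ‖x n ω - z‖^2 ∂P)
            + (1/(β*t))^2*d) := by
            exact mul_le_mul_of_nonneg_left h hb.le
        _ = (β^2*t^2 - 2*β^2*t + c) * (∫ ω, ‖x n ω - z‖^2 ∂P) + d := by
            field_simp
    have hEt : (∫ ω, ‖x n ω - z‖^2 ∂P) * t ≤ u := (le_div_iff₀ htpos).mp ih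
    have hcb : 2*c ≤ β^2*t := by
      have h1 : 2*c ≤ (r:ℝ)*β^2 := (div_le_iff₀ hβ2).mp hr
      have h2 : (r:ℝ) ≤ t := by
        have : (0:ℝ) ≤ (n:ℝ) := Nat.cast_nonneg n
        simp only [hT]; linarith
      nlinarith
    have hdb : 2*d ≤ β^2*u := by
      have h1 : 2*d ≤ u*β^2 := (div_le_iff₀ hβ2).mp hu2
      linarith
    have he0 : 0 ≤ ∫ ω, ‖x n ω - z‖^2 ∂P := henn n
    have he1 : 0 ≤ ∫ ω, ‖x (n+1) ω - z‖^2 ∂P := henn (n+1)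
    rw [le_div_iff₀ (by linarith : (0:ℝ) < t+1)]
    exact RM_arith hβ2 ht1 he0 he1 hstep' hEt hcb hdb hupos.le
end
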